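/- arXiv:2210.16429 — 4 statements merged into one kernel-verified Lean document; each statement's English description precedes it below -/
import Mathlib

section
/- For σ > 0, b > 0, t > 0, d ≥ 1, and an integer R, the measure of the ball B_d(R) under the probability density ρ_d(t,·) equals exp(−σt p^{(−R+1)b}) + p^{dR} Σ_{j ≤ −R} (exp(−σt p^{jb}) − exp(−σt p^{(j+1)b})) p^{dj}. -/
open MeasureTheory Metric Real Pointwise

noncomputable instance (p : ℕ) [Fact p.Prime] : MeasurableSpace ℚ_[p] := borel _
instance (p : ℕ) [Fact p.Prime] : BorelSpace ℚ_[p] := ⟨rfl⟩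

namespace RhoAux

variable {p : ℕ} [Fact p.Prime] {d : ℕ}

lemma pp0 : (0:ℝ) < p := by exact_mod_cast (Fact.out : p.Prime).pos
lemma pp1 : (1:ℝ) < p := by exact_mod_cast (Fact.out : p.Prime).one_lt

lemma coord_exists (S : ℤ) (x : ℚ_[p]) (hx : ‖x‖ ≤ (p:ℝ) ^ (S+1)) :
    ∃ a : Fin p, ‖x - (a : ℚ_[p]) * (p : ℚ_[p]) ^ (-(S+1))‖ ≤ (p:ℝ) ^ S := by
  have hp0 : (0:ℝ) < p := pp0
  have hq0 : ((p:ℚ_[p])) ≠ 0 := by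
    exact_mod_cast (Fact.out : p.Prime).ne_zero
  set y : ℚ_[p] := x * (p : ℚ_[p]) ^ (S+1) with hy
  have hyn : ‖y‖ ≤ 1 := by
    rw [hy, norm_mul, Padic.norm_p_zpow]
    calc ‖x‖ * (p:ℝ) ^ (-(S+1)) ≤ (p:ℝ) ^ (S+1) * (p:ℝ) ^ (-(S+1)) := by
          apply mul_le_mul_of_nonneg_right hx (zpow_nonneg hp0.le _)
      _ = 1 := by rw [← zpow_add₀ hp0.ne', add_neg_cancel, zpow_zero]
  set z : ℤ_[p] := ⟨y, hyn⟩ with hz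
  have hlt : z.appr 1 < p := by have := z.appr_lt 1; simpa using this
  refine ⟨⟨z.appr 1, hlt⟩, ?_⟩
  have hspec := PadicInt.appr_spec 1 z
  rw [Ideal.mem_span_singleton, pow_one] at hspec
  obtain ⟨w, hw⟩ := hspec
  have hnorm : ‖z - (z.appr 1 : ℤ_[p])‖ ≤ (p:ℝ)⁻¹ := by
    rw [hw, norm_mul, PadicInt.norm_p]
    calc (p:ℝ)⁻¹ * ‖w‖ ≤ (p:ℝ)⁻¹ * 1 := by
          apply mul_le_mul_of_nonneg_left (PadicInt.norm_le_one w) (by positivity)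
      _ = (p:ℝ)⁻¹ := mul_one _
  have hxy : x - ((z.appr 1 : ℕ) : ℚ_[p]) * (p : ℚ_[p]) ^ (-(S+1))
      = ((z - (z.appr 1 : ℤ_[p]) : ℤ_[p]) : ℚ_[p]) * (p : ℚ_[p]) ^ (-(S+1)) := by
    have hinv : (p:ℚ_[p]) ^ (S+1) * (p:ℚ_[p]) ^ (-(S+1)) = 1 := by
      rw [← zpow_add₀ hq0, add_neg_cancel, zpow_zero]
    push_cast
    change x - _ = (y - _) * _
    rw [hy, sub_mul, mul_assoc, hinv, mul_one]
  rw [hxy, norm_mul, Padic.norm_p_zpow, neg_neg, ← PadicInt.norm_def]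
  calc ‖z - (z.appr 1 : ℤ_[p])‖ * (p:ℝ) ^ (S+1) ≤ (p:ℝ)⁻¹ * (p:ℝ) ^ (S+1) := by
        apply mul_le_mul_of_nonneg_right hnorm (zpow_nonneg hp0.le _)
    _ = (p:ℝ) ^ S := by
        rw [← zpow_neg_one, ← zpow_add₀ hp0.ne']
        norm_num

lemma coord_mem (S : ℤ) (x : ℚ_[p]) (a : Fin p)
    (h : ‖x - (a : ℚ_[p]) * (p : ℚ_[p]) ^ (-(S+1))‖ ≤ (p:ℝ) ^ S) :
    ‖x‖ ≤ (p:ℝ) ^ (S+1) := by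
  have hp0 : (0:ℝ) < p := pp0
  have h2 : ‖(a : ℚ_[p]) * (p : ℚ_[p]) ^ (-(S+1))‖ ≤ (p:ℝ) ^ (S+1) := by
    rw [norm_mul, Padic.norm_p_zpow, neg_neg]
    have : ‖(a : ℚ_[p])‖ ≤ 1 := by
      have := Padic.norm_int_le_one (p := p) (a : ℤ)
      simpa using this
    nlinarith [zpow_pos hp0 (S+1)]
  have hx : x = (x - (a : ℚ_[p]) * (p : ℚ_[p]) ^ (-(S+1))) + (a : ℚ_[p]) * (p : ℚ_[p]) ^ (-(S+1)) := by ring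
  rw [hx]
  refine le_trans (Padic.nonarchimedean _ _) (max_le (le_trans h ?_) h2)
  exact zpow_le_zpow_right₀ pp1.le (by omega)

lemma coord_disj (S : ℤ) (x : ℚ_[p]) (a a' : Fin p) (hne : a ≠ a')
    (h : ‖x - (a : ℚ_[p]) * (p : ℚ_[p]) ^ (-(S+1))‖ ≤ (p:ℝ) ^ S)
    (h' : ‖x - (a' : ℚ_[p]) * (p : ℚ_[p]) ^ (-(S+1))‖ ≤ (p:ℝ) ^ S) : False := by
  have hp0 : (0:ℝ) < p := pp0
  have key : ‖((a : ℚ_[p]) - a') * (p : ℚ_[p]) ^ (-(S+1))‖ ≤ (p:ℝ) ^ S := by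
    have hsplit : ((a : ℚ_[p]) - a') * (p : ℚ_[p]) ^ (-(S+1))
        = (x - (a' : ℚ_[p]) * (p : ℚ_[p]) ^ (-(S+1))) +
          (-(x - (a : ℚ_[p]) * (p : ℚ_[p]) ^ (-(S+1)))) := by ring
    rw [hsplit]
    refine le_trans (Padic.nonarchimedean _ _) (max_le h' ?_)
    rwa [norm_neg]
  have hone : ‖((a : ℚ_[p]) - a')‖ = 1 := by
    have hcast : ((a : ℚ_[p]) - a') = (((a : ℤ) - (a' : ℤ) : ℤ) : ℚ_[p]) := by push_cast; ring
    rw [hcast]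
    refine le_antisymm (Padic.norm_int_le_one _) ?_
    by_contra hlt
    push_neg at hlt
    have hdvd := Padic.norm_intCast_lt_one_iff.1 hlt
    have hz := Int.eq_zero_of_abs_lt_dvd hdvd (by
      have h1 : (a : ℤ) < p := by exact_mod_cast a.2
      have h2 : (a' : ℤ) < p := by exact_mod_cast a'.2
      have h3 : (0:ℤ) ≤ a := by positivity
      have h4 : (0:ℤ) ≤ a' := by positivity
      rw [abs_lt]; omega)
    have : (a : ℤ) = a' := by omega
    exact hne (Fin.ext (by exact_mod_cast this))
  rw [norm_mul, hone, one_mul, Padic.norm_p_zpow, neg_neg] at key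
  exact absurd key (not_le.2 (zpow_lt_zpow_right₀ pp1 (by omega)))

lemma mem_cb_iff (S : ℤ) (x : Fin d → ℚ_[p]) :
    x ∈ closedBall (0 : Fin d → ℚ_[p]) ((p:ℝ) ^ S) ↔ ∀ i, ‖x i‖ ≤ (p:ℝ) ^ S := by
  rw [mem_closedBall, dist_zero_right]
  exact pi_norm_le_iff_of_nonneg (zpow_nonneg pp0.le _)

lemma mem_coset_iff (S : ℤ) (x : Fin d → ℚ_[p]) (v : Fin d → Fin p) :
    x ∈ ((fun i => (v i : ℚ_[p]) * (p : ℚ_[p]) ^ (-(S+1))) +ᵥ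
        closedBall (0 : Fin d → ℚ_[p]) ((p:ℝ) ^ S)) ↔
      ∀ i, ‖x i - (v i : ℚ_[p]) * (p : ℚ_[p]) ^ (-(S+1))‖ ≤ (p:ℝ) ^ S := by
  rw [vadd_closedBall]
  simp only [vadd_eq_add, add_zero, mem_closedBall, dist_eq_norm]
  rw [pi_norm_le_iff_of_nonneg (zpow_nonneg pp0.le _)]
  simp [Pi.sub_apply]

lemma ball_decomp (S : ℤ) :
    closedBall (0 : Fin d → ℚ_[p]) ((p:ℝ) ^ (S+1)) =
      ⋃ v : Fin d → Fin p,
        ((fun i => (v i : ℚ_[p]) * (p : ℚ_[p]) ^ (-(S+1))) +ᵥ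
          closedBall (0 : Fin d → ℚ_[p]) ((p:ℝ) ^ S)) := by
  ext x
  simp only [Set.mem_iUnion]
  constructor
  · intro hx
    rw [mem_cb_iff] at hx
    choose a ha using fun i => coord_exists S (x i) (hx i)
    exact ⟨a, (mem_coset_iff S x a).2 ha⟩
  · rintro ⟨v, hv⟩
    rw [mem_coset_iff] at hv
    rw [mem_cb_iff]
    exact fun i => coord_mem S (x i) (v i) (hv i)

lemma meas_step (μ : Measure (Fin d → ℚ_[p])) [μ.IsAddHaarMeasure] (S : ℤ) :
    μ (closedBall (0 : Fin d → ℚ_[p]) ((p:ℝ) ^ (S+1))) =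
      (p : ENNReal) ^ (d : ℕ) * μ (closedBall (0 : Fin d → ℚ_[p]) ((p:ℝ) ^ S)) := by
  rw [ball_decomp S, measure_iUnion ?_ ?_]
  · simp only [measure_vadd, tsum_fintype, Finset.sum_const, Finset.card_univ]
    rw [Fintype.card_fun]
    simp [nsmul_eq_mul]
  · intro v v' hne
    rw [Function.onFun]
    rw [Set.disjoint_left]
    intro x hx hx'
    rw [mem_coset_iff] at hx hx'
    obtain ⟨i, hi⟩ := Function.ne_iff.1 hne
    exact coord_disj S (x i) (v i) (v' i) hi (hx i) (hx' i)
  · intro v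
    rw [vadd_closedBall]
    exact measurableSet_closedBall

lemma meas_ball (μ : Measure (Fin d → ℚ_[p])) [μ.IsAddHaarMeasure]
    (hμ : μ (closedBall (0 : Fin d → ℚ_[p]) 1) = 1) (S : ℤ) :
    μ (closedBall (0 : Fin d → ℚ_[p]) ((p:ℝ) ^ S)) = (p : ENNReal) ^ ((d:ℤ) * S) := by
  have hp0 : (p : ENNReal) ≠ 0 := by
    exact_mod_cast (Fact.out : p.Prime).ne_zero
  have hptop : (p : ENNReal) ≠ ⊤ := ENNReal.natCast_ne_top p
  induction S using Int.induction_on with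
  | zero => simpa using hμ
  | succ n ih =>
    rw [meas_step μ, ih, ← zpow_natCast (p : ENNReal) d, ← ENNReal.zpow_add hp0 hptop]
    congr 1
    push_cast
    ring
  | pred n ih =>
    have h := meas_step μ (-(n:ℤ) - 1)
    rw [show (-(n:ℤ) - 1) + 1 = -(n:ℤ) by ring, ih] at h
    have hXd : (p : ENNReal) ^ ((d:ℤ) * (-(n:ℤ)-1)) * (p : ENNReal) ^ (d : ℕ)
        = (p : ENNReal) ^ ((d:ℤ) * (-(n:ℤ))) := by
      rw [← zpow_natCast (p : ENNReal) d, ← ENNReal.zpow_add hp0 hptop]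
      congr 1
      push_cast
      ring
    have hd0 : ((p : ENNReal) ^ (d : ℕ)) ≠ 0 := pow_ne_zero _ hp0
    have hdt : ((p : ENNReal) ^ (d : ℕ)) ≠ ⊤ := ENNReal.pow_ne_top hptop
    have h2 : (p : ENNReal) ^ (d : ℕ) * μ (closedBall (0 : Fin d → ℚ_[p]) ((p:ℝ) ^ (-(n:ℤ)-1)))
        = (p : ENNReal) ^ (d : ℕ) * (p : ENNReal) ^ ((d:ℤ) * (-(n:ℤ)-1)) := by
      rw [← h, ← hXd]; ring
    exact (ENNReal.mul_right_inj hd0 hdt).1 h2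


lemma cast_zpow (k : ℤ) : ((p:ℕ) : ENNReal) ^ k = ENNReal.ofReal ((p:ℝ) ^ k) := by
  have hp0 : (0:ℝ) < p := pp0
  obtain ⟨n, rfl | rfl⟩ := k.eq_nat_or_neg
  · rw [zpow_natCast, zpow_natCast, ENNReal.ofReal_pow hp0.le, ENNReal.ofReal_natCast]
  · rw [ENNReal.zpow_neg, zpow_neg, zpow_natCast, zpow_natCast,
      ENNReal.ofReal_inv_of_pos (by positivity), ENNReal.ofReal_pow hp0.le,
      ENNReal.ofReal_natCast]

lemma telescope {F : ℕ → ℝ} (hmono : ∀ n, F (n+1) ≤ F n)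
    (h0 : Filter.Tendsto F Filter.atTop (nhds 0)) :
    HasSum (fun n => F n - F (n+1)) (F 0) := by
  rw [hasSum_iff_tendsto_nat_of_nonneg (fun n => sub_nonneg.2 (hmono n)) _]
  simp only [Finset.sum_range_sub']
  simpa using tendsto_const_nhds.sub h0

lemma tendsto_eF {σ t b : ℝ} (hσ : 0 < σ) (ht : 0 < t) (hb : 0 < b) (c : ℤ) :
    Filter.Tendsto (fun n : ℕ => Real.exp (-(σ * t * (p:ℝ) ^ (((c + n : ℤ) : ℝ) * b))))
      Filter.atTop (nhds 0) := by
  have hp1 : (1:ℝ) < p := pp1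
  have h0 : Filter.Tendsto (fun n : ℕ => (n:ℝ)) Filter.atTop Filter.atTop :=
    tendsto_natCast_atTop_atTop
  have h1 : Filter.Tendsto (fun n : ℕ => ((c:ℝ) + n) * b) Filter.atTop Filter.atTop :=
    (Filter.tendsto_atTop_add_const_left _ ((c:ℝ)) h0).atTop_mul_const hb
  have h2 : Filter.Tendsto (fun n : ℕ => (p:ℝ) ^ (((c:ℝ) + n) * b)) Filter.atTop Filter.atTop := by
    have : ∀ n : ℕ, (p:ℝ) ^ (((c:ℝ) + n) * b) = Real.exp (Real.log p * (((c:ℝ) + n) * b)) := by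
      intro n; rw [Real.rpow_def_of_pos (pp0 (p := p))]
    simp only [this]
    exact Real.tendsto_exp_atTop.comp (h1.const_mul_atTop (Real.log_pos hp1))
  have h3 : Filter.Tendsto (fun n : ℕ => σ * t * (p:ℝ) ^ (((c:ℝ) + n) * b))
      Filter.atTop Filter.atTop := h2.const_mul_atTop (by positivity)
  have h4 := Real.tendsto_exp_atBot.comp (Filter.tendsto_neg_atTop_atBot.comp h3)
  have hcast : ∀ n : ℕ, ((c + n : ℤ) : ℝ) = (c:ℝ) + n := by intro n; push_cast; ring
  simp only [hcast]
  exact h4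

def eqS (R : ℤ) : ℕ ≃ ↥{j : ℤ | j ≤ -R} where
  toFun n := ⟨-R - n, by simp only [Set.mem_setOf_eq]; omega⟩
  invFun j := (-R - j.1).toNat
  left_inv n := by show (-R - (-R - (n:ℤ))).toNat = n; omega
  right_inv j := Subtype.ext (by
    have hj := j.2
    simp only [Set.mem_setOf_eq] at hj
    show -R - (((-R - j.1).toNat : ℤ)) = j.1
    omega)

def eqC (R : ℤ) : ℕ ≃ ↥({j : ℤ | j ≤ -R}ᶜ) where
  toFun n := ⟨-R + 1 + n, by simp only [Set.mem_compl_iff, Set.mem_setOf_eq]; omega⟩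
  invFun j := (j.1 + R - 1).toNat
  left_inv n := by show ((-R + 1 + (n:ℤ)) + R - 1).toNat = n; omega
  right_inv j := Subtype.ext (by
    have hj := j.2
    simp only [Set.mem_compl_iff, Set.mem_setOf_eq, not_le] at hj
    show -R + 1 + (((j.1 + R - 1).toNat : ℤ)) = j.1
    omega)

end RhoAux

open RhoAux


/-- The density of the max-norm `p`-adic Brownian motion at time `t`:
`ρ_d(t,x) = Σ_{r∈ℤ} (e^{−σt p^{rb}} − e^{−σt p^{(r+1)b}}) p^{dr} 1_{B_d(−r)}(x)`. -/
noncomputable def rho (p : ℕ) [Fact p.Prime] (σ b : ℝ) (d : ℕ) (t : ℝ)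
    (x : Fin d → ℚ_[p]) : ℝ :=
  ∑' r : ℤ,
    (Real.exp (-(σ * t * (p : ℝ) ^ ((r : ℝ) * b))) -
        Real.exp (-(σ * t * (p : ℝ) ^ (((r : ℝ) + 1) * b)))) *
      (p : ℝ) ^ ((d : ℤ) * r) *
      Set.indicator (closedBall (0 : Fin d → ℚ_[p]) ((p : ℝ) ^ (-r)))
        (fun _ => (1 : ℝ)) x

set_option maxHeartbeats 2000000 in
/-- The measure of the ball `B_d(R)` under the density `ρ_d(t,·)` equals
`exp(−σt p^{(−R+1)b}) + p^{dR} Σ_{j ≤ −R} (exp(−σt p^{jb}) − exp(−σt p^{(j+1)b})) p^{dj}`. -/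
theorem rho_measure_ball (p : ℕ) [Fact p.Prime] (σ b t : ℝ)
    (hσ : 0 < σ) (hb : 0 < b) (ht : 0 < t) (d : ℕ) (hd : 1 ≤ d) (R : ℤ)
    (μ : Measure (Fin d → ℚ_[p])) [μ.IsAddHaarMeasure]
    (hμ : μ (closedBall (0 : Fin d → ℚ_[p]) 1) = 1) :
    ∫ x in closedBall (0 : Fin d → ℚ_[p]) ((p : ℝ) ^ R), rho p σ b d t x ∂μ =
      Real.exp (-(σ * t * (p : ℝ) ^ (((-R : ℤ) + 1 : ℝ) * b))) +
        (p : ℝ) ^ ((d : ℤ) * R) *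
          ∑' j : {j : ℤ // j ≤ -R},
            (Real.exp (-(σ * t * (p : ℝ) ^ ((j.1 : ℝ) * b))) -
                Real.exp (-(σ * t * (p : ℝ) ^ (((j.1 : ℝ) + 1) * b)))) *
              (p : ℝ) ^ ((d : ℤ) * j.1) := by
  classical
  have hp0 : (0:ℝ) < p := pp0
  have hp1 : (1:ℝ) < p := pp1
  set E : ℤ → ℝ := fun r => Real.exp (-(σ * t * (p:ℝ) ^ ((r:ℝ) * b))) with hE
  have hEcast : ∀ r : ℤ, E (r+1) = Real.exp (-(σ * t * (p:ℝ) ^ (((r:ℝ) + 1) * b))) := by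
    intro r; simp only [hE]; norm_num
  have hE_pos : ∀ r : ℤ, 0 < E r := fun r => Real.exp_pos _
  have hE_anti : ∀ r : ℤ, E (r+1) ≤ E r := by
    intro r
    rw [hEcast r]
    apply Real.exp_le_exp.2
    rw [neg_le_neg_iff]
    apply mul_le_mul_of_nonneg_left _ (by positivity)
    exact Real.rpow_le_rpow_of_exponent_le hp1.le (by nlinarith)
  have hE_le_one : ∀ r : ℤ, E r ≤ 1 := by
    intro r
    have h := Real.exp_le_exp.2 (show -(σ * t * (p:ℝ) ^ ((r:ℝ) * b)) ≤ 0 by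
      have : (0:ℝ) ≤ σ * t * (p:ℝ) ^ ((r:ℝ) * b) := by positivity
      linarith)
    rw [hE]
    simpa only [Real.exp_zero] using h
  have ha_nonneg : ∀ r : ℤ, 0 ≤ E r - E (r+1) := fun r => sub_nonneg.2 (hE_anti r)
  set c : ℤ → ℝ := fun r => (E r - E (r+1)) * (p:ℝ) ^ ((d:ℤ)*r) with hc
  have hc_nonneg : ∀ r, 0 ≤ c r := fun r => mul_nonneg (ha_nonneg r) (zpow_nonneg hp0.le _)
  set f : ℤ → (Fin d → ℚ_[p]) → ℝ :=
    fun r => Set.indicator (closedBall (0 : Fin d → ℚ_[p]) ((p:ℝ) ^ (-r))) (fun _ => c r) with hf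
  have hrho : ∀ x, rho p σ b d t x = ∑' r : ℤ, f r x := by
    intro x
    unfold rho
    refine tsum_congr fun r => ?_
    by_cases hx : x ∈ closedBall (0 : Fin d → ℚ_[p]) ((p:ℝ) ^ (-r))
    · simp only [hf, hc, hE, Set.indicator_of_mem hx]
      push_cast
      ring
    · simp only [hf, Set.indicator_of_notMem hx, mul_zero]
  have hBmeas : ∀ S : ℤ, MeasurableSet (closedBall (0 : Fin d → ℚ_[p]) ((p:ℝ) ^ S)) :=
    fun S => measurableSet_closedBall
  have hfm : ∀ r : ℤ, AEStronglyMeasurable (f r)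
      (μ.restrict (closedBall (0 : Fin d → ℚ_[p]) ((p:ℝ) ^ R))) := by
    intro r
    simp only [hf]
    exact (measurable_const.indicator (hBmeas (-r))).aestronglyMeasurable
  have hinter : ∀ r : ℤ,
      μ (closedBall (0 : Fin d → ℚ_[p]) ((p:ℝ) ^ (-r)) ∩ closedBall 0 ((p:ℝ) ^ R))
        = ENNReal.ofReal (if r ≤ -R then (p:ℝ) ^ ((d:ℤ)*R) else (p:ℝ) ^ ((d:ℤ)*(-r))) := by
    intro r
    by_cases hr : r ≤ -R
    · rw [if_pos hr, Set.inter_eq_self_of_subset_right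
        (closedBall_subset_closedBall (zpow_le_zpow_right₀ hp1.le (by omega))),
        meas_ball μ hμ, cast_zpow]
    · rw [if_neg hr, Set.inter_eq_self_of_subset_left
        (closedBall_subset_closedBall (zpow_le_zpow_right₀ hp1.le (by omega))),
        meas_ball μ hμ, cast_zpow]
  set g : ℤ → ℝ := fun r => if r ≤ -R then c r * (p:ℝ) ^ ((d:ℤ)*R) else E r - E (r+1) with hg
  have hg_nonneg : ∀ r, 0 ≤ g r := by
    intro r; simp only [hg]; split
    · exact mul_nonneg (hc_nonneg r) (zpow_nonneg hp0.le _)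
    · exact ha_nonneg r
  have hzpow_cancel : ∀ r : ℤ, (p:ℝ) ^ ((d:ℤ)*r) * (p:ℝ) ^ ((d:ℤ)*(-r)) = 1 := by
    intro r
    rw [← zpow_add₀ hp0.ne', show (d:ℤ)*r + (d:ℤ)*(-r) = 0 by ring, zpow_zero]
  have hcg : ∀ r : ℤ,
      c r * (if r ≤ -R then (p:ℝ) ^ ((d:ℤ)*R) else (p:ℝ) ^ ((d:ℤ)*(-r))) = g r := by
    intro r
    simp only [hg]
    split
    · rfl
    · simp only [hc]
      rw [mul_assoc, hzpow_cancel r, mul_one]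
  have hif_nonneg : ∀ r : ℤ,
      0 ≤ (if r ≤ -R then (p:ℝ) ^ ((d:ℤ)*R) else (p:ℝ) ^ ((d:ℤ)*(-r))) := by
    intro r; split <;> positivity
  have hint : ∀ r : ℤ,
      ∫ x in closedBall (0 : Fin d → ℚ_[p]) ((p:ℝ) ^ R), f r x ∂μ = g r := by
    intro r
    simp only [hf]
    rw [integral_indicator (hBmeas (-r)), setIntegral_const, measureReal_def,
      Measure.restrict_apply (hBmeas (-r)), hinter r,
      ENNReal.toReal_ofReal (hif_nonneg r), smul_eq_mul, mul_comm]
    exact hcg r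
  have hlint : ∀ r : ℤ,
      ∫⁻ x, ‖f r x‖ₑ ∂(μ.restrict (closedBall (0 : Fin d → ℚ_[p]) ((p:ℝ) ^ R)))
        = ENNReal.ofReal (g r) := by
    intro r
    have hnn : (fun x => ‖f r x‖ₑ) =
        fun x => Set.indicator (closedBall (0 : Fin d → ℚ_[p]) ((p:ℝ) ^ (-r)))
          (fun _ => ENNReal.ofReal (c r)) x := by
      funext x
      simp only [hf]
      by_cases hx : x ∈ closedBall (0 : Fin d → ℚ_[p]) ((p:ℝ) ^ (-r))
      · rw [Set.indicator_of_mem hx, Set.indicator_of_mem hx,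
          Real.enorm_eq_ofReal (hc_nonneg r)]
      · rw [Set.indicator_of_notMem hx, Set.indicator_of_notMem hx]; simp
    rw [hnn, lintegral_indicator (hBmeas (-r)), setLIntegral_const,
      Measure.restrict_apply (hBmeas (-r)), hinter r,
      ← ENNReal.ofReal_mul (hc_nonneg r), hcg r]
  -- sum splitting
  set F : ℕ → ℝ := fun n => E (-R + 1 + n) with hF
  have hFmono : ∀ n : ℕ, F (n+1) ≤ F n := by
    intro n
    simp only [hF]
    have h := hE_anti (-R + 1 + n)
    have hcast2 : (-R + 1 + ((n:ℤ)) + 1) = (-R + 1 + ((n+1 : ℕ) : ℤ)) := by push_cast; ring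
    rwa [hcast2] at h
  have hF0 : Filter.Tendsto F Filter.atTop (nhds 0) := by
    simp only [hF, hE]
    exact tendsto_eF hσ ht hb (-R + 1)
  have htel := telescope hFmono hF0
  have hF0eq : F 0 = E (-R + 1) := by simp only [hF]; norm_num
  rw [hF0eq] at htel
  have hcompeq : (fun j : ↥({j : ℤ | j ≤ -R}ᶜ) => g j.1) ∘ (eqC R) = fun n : ℕ => F n - F (n+1) := by
    funext n
    show g (-R + 1 + (n:ℤ)) = F n - F (n+1)
    simp only [hg, hF]
    rw [if_neg (by omega)]
    congr 2
    push_cast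
    ring
  rw [← hcompeq] at htel
  have hCsum : HasSum (fun j : ↥({j : ℤ | j ≤ -R}ᶜ) => g j.1) (E (-R + 1)) := (eqC R).hasSum_iff.1 htel
  have hSsummable : Summable (fun j : ↥{j : ℤ | j ≤ -R} => g j.1) := by
    rw [← (eqS R).summable_iff]
    have hgeom : Summable (fun n : ℕ => ((p:ℝ) ^ (-(d:ℤ)))^n) := by
      apply summable_geometric_of_lt_one (zpow_nonneg hp0.le _)
      have h := zpow_lt_zpow_right₀ hp1 (show -(d:ℤ) < 0 by omega)
      simpa using h
    apply Summable.of_nonneg_of_le (fun n => hg_nonneg _) _ hgeom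
    intro n
    show g (-R - (n:ℤ)) ≤ ((p:ℝ) ^ (-(d:ℤ)))^n
    have h1 : (-R - (n:ℤ)) ≤ -R := by omega
    simp only [hg, hc]
    rw [if_pos h1]
    have e1 : ((p:ℝ) ^ (-(d:ℤ)))^n = (p:ℝ) ^ ((d:ℤ)*(-R - n)) * (p:ℝ) ^ ((d:ℤ)*R) := by
      rw [← zpow_natCast ((p:ℝ) ^ (-(d:ℤ))), ← zpow_mul, ← zpow_add₀ hp0.ne']
      congr 1
      push_cast
      ring
    rw [e1]
    have h2 : (0:ℝ) < (p:ℝ) ^ ((d:ℤ)*(-R - (n:ℤ))) := zpow_pos hp0 _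
    have h3 : (0:ℝ) < (p:ℝ) ^ ((d:ℤ)*R) := zpow_pos hp0 _
    have h4 : E (-R - (n:ℤ)) - E (-R - (n:ℤ) + 1) ≤ 1 :=
      le_trans (sub_le_self _ (hE_pos _).le) (hE_le_one _)
    nlinarith [ha_nonneg (-R - (n:ℤ)), mul_nonneg (sub_nonneg.2 h4) (mul_pos h2 h3).le]
  have hCsummable : Summable (fun j : ↥({j : ℤ | j ≤ -R}ᶜ) => g j.1) := hCsum.summable
  have hgsummable : Summable g := summable_subtype_and_compl.1 ⟨hSsummable, hCsummable⟩
  -- the main computation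
  have step1 : ∫ x in closedBall (0 : Fin d → ℚ_[p]) ((p : ℝ) ^ R), rho p σ b d t x ∂μ
      = ∑' r : ℤ, ∫ x in closedBall (0 : Fin d → ℚ_[p]) ((p:ℝ) ^ R), f r x ∂μ := by
    rw [integral_congr_ae (Filter.Eventually.of_forall fun x => hrho x)]
    apply integral_tsum hfm
    rw [tsum_congr hlint, ← ENNReal.ofReal_tsum_of_nonneg hg_nonneg hgsummable]
    exact ENNReal.ofReal_ne_top
  rw [step1, tsum_congr hint, ← Summable.tsum_add_tsum_compl (f := g) (s := {j : ℤ | j ≤ -R}) hSsummable hCsummable]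
  have hCtsum : ∑' j : ↥({j : ℤ | j ≤ -R}ᶜ), g j.1 = E (-R + 1) := hCsum.tsum_eq
  have hStsum : (∑' j : ↥{j : ℤ | j ≤ -R}, g j.1) = (p:ℝ) ^ ((d:ℤ)*R) *
      ∑' j : {j : ℤ // j ≤ -R},
        (Real.exp (-(σ * t * (p : ℝ) ^ ((j.1 : ℝ) * b))) -
            Real.exp (-(σ * t * (p : ℝ) ^ (((j.1 : ℝ) + 1) * b)))) *
          (p : ℝ) ^ ((d : ℤ) * j.1) := by
    have h1 : (fun j : ↥{j : ℤ | j ≤ -R} => g j.1) = fun j : ↥{j : ℤ | j ≤ -R} =>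
        ((Real.exp (-(σ * t * (p : ℝ) ^ ((j.1 : ℝ) * b))) -
            Real.exp (-(σ * t * (p : ℝ) ^ (((j.1 : ℝ) + 1) * b)))) *
          (p : ℝ) ^ ((d : ℤ) * j.1)) * (p:ℝ) ^ ((d:ℤ)*R) := by
      funext j
      have hj := j.2
      simp only [Set.mem_setOf_eq] at hj
      simp only [hg, hc]
      rw [if_pos hj, hEcast j.1, hE]
    rw [h1, tsum_mul_right, mul_comm]
    rfl
  rw [hCtsum, hStsum]
  have hEfinal : E (-R + 1) = Real.exp (-(σ * t * (p : ℝ) ^ (((-R : ℤ) + 1 : ℝ) * b))) := by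
    simp only [hE]
    norm_num
  rw [hEfinal, add_comm]
end

section
/- Fix a prime p, σ > 0, b > 0, t > 0, d ≥ 2, integers r ≤ R, and a ∈ B(R) ⊂ Q_p. Let μ_t be the probability measure on Q_p^d with density ρ_d(t,·). Then the conditional probability μ_t(x₁ ∈ B(r,a) | (x₂,…,x_d) ∈ S_{d−1}(R)) equals p^r · [Σ_{j ≤ −R} (e^{−σt p^{jb}} − e^{−σt p^{(j+1)b}}) p^{dj}] / [Σ_{j ≤ −R} (e^{−σt p^{jb}} − e^{−σt p^{(j+1)b}}) p^{(d−1)j}]. -/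
open MeasureTheory Metric Real

section AuxPadicHaar

open ENNReal

variable (p : ℕ) [hp : Fact p.Prime]

lemma hp1 : (1:ℝ) < p := by exact_mod_cast hp.out.one_lt
lemma hp0 : (0:ℝ) < p := lt_trans one_pos (hp1 p)

/-- ball decomposition -/
lemma ball_eq_union (k : ℤ) :
    closedBall (0:ℚ_[p]) ((p:ℝ)^(k+1)) =
      ⋃ i : Fin p, {x : ℚ_[p] | ‖x - (i : ℚ_[p]) * (p:ℚ_[p])^(-(k+1))‖ ≤ (p:ℝ)^k} := by
  have hpR : (0:ℝ) < p := hp0 p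
  have hc : ‖(p:ℚ_[p])^(-(k+1))‖ = (p:ℝ)^(k+1) := by
    rw [Padic.norm_p_zpow]; ring_nf
  ext x
  simp only [mem_closedBall, dist_zero_right, Set.mem_iUnion, Set.mem_setOf_eq]
  constructor
  · intro hx
    set c : ℚ_[p] := (p:ℚ_[p])^(-(k+1)) with hcdef
    have hc0 : c ≠ 0 := zpow_ne_zero _ (by exact_mod_cast hp.out.ne_zero)
    have hy : ‖x / c‖ ≤ 1 := by
      rw [norm_div, hc, div_le_one (by positivity)]
      simpa using hx
    set z : ℤ_[p] := ⟨x / c, hy⟩ with hz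
    have hi : (z.appr 1 : ℕ) < p := by simpa using z.appr_lt 1
    refine ⟨⟨z.appr 1, hi⟩, ?_⟩
    have hspec := z.appr_spec 1
    rw [Ideal.mem_span_singleton] at hspec
    obtain ⟨w, hw⟩ := hspec
    have hnorm : ‖(z - (z.appr 1 : ℤ_[p]) : ℤ_[p])‖ ≤ (p:ℝ)⁻¹ := by
      rw [hw]
      calc ‖((p:ℤ_[p])^1 * w : ℤ_[p])‖ = ‖((p:ℤ_[p]) : ℤ_[p])‖ * ‖w‖ := by
            rw [pow_one, norm_mul]
        _ ≤ (p:ℝ)⁻¹ * 1 := by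
            rw [PadicInt.norm_p]
            exact mul_le_mul_of_nonneg_left (PadicInt.norm_le_one w) (by positivity)
        _ = (p:ℝ)⁻¹ := mul_one _
    have key : x - ((z.appr 1 : ℕ) : ℚ_[p]) * c = (x / c - (z.appr 1 : ℕ)) * c := by
      field_simp
    rw [key, norm_mul, hc]
    have h2 : ‖x / c - ((z.appr 1 : ℕ) : ℚ_[p])‖ ≤ (p:ℝ)⁻¹ := by
      have he : ((z - (z.appr 1 : ℤ_[p]) : ℤ_[p]) : ℚ_[p]) = x / c - ((z.appr 1 : ℕ) : ℚ_[p]) := by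
        push_cast
        rfl
      rw [← he]
      exact hnorm
    calc ‖x / c - ((z.appr 1:ℕ):ℚ_[p])‖ * (p:ℝ)^(k+1) ≤ (p:ℝ)⁻¹ * (p:ℝ)^(k+1) := by
          gcongr
      _ = (p:ℝ)^k := by
          rw [← zpow_neg_one, ← zpow_add₀ (ne_of_gt hpR)]; ring_nf
  · rintro ⟨i, hi⟩
    have h1 : ‖(i : ℚ_[p]) * (p:ℚ_[p])^(-(k+1))‖ ≤ (p:ℝ)^(k+1) := by
      rw [norm_mul, hc]
      have hle : ‖((i:ℕ) : ℚ_[p])‖ ≤ 1 := by exact_mod_cast Padic.norm_int_le_one (i:ℕ)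
      nlinarith [zpow_pos hpR (k+1), norm_nonneg ((i:ℕ):ℚ_[p])]
    calc ‖x‖ = ‖(x - (i:ℚ_[p]) * (p:ℚ_[p])^(-(k+1))) + (i:ℚ_[p]) * (p:ℚ_[p])^(-(k+1))‖ := by
          ring_nf
      _ ≤ max ‖x - (i:ℚ_[p]) * (p:ℚ_[p])^(-(k+1))‖ ‖(i:ℚ_[p]) * (p:ℚ_[p])^(-(k+1))‖ :=
          Padic.nonarchimedean _ _
      _ ≤ (p:ℝ)^(k+1) := by
          apply max_le _ h1
          exact hi.trans (zpow_le_zpow_right₀ (le_of_lt (hp1 p)) (by omega))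

noncomputable def unitBallPC : TopologicalSpace.PositiveCompacts ℚ_[p] where
  carrier := closedBall 0 1
  isCompact' := isCompact_closedBall 0 1
  interior_nonempty' :=
    ⟨0, interior_maximal ball_subset_closedBall isOpen_ball (by simp)⟩

noncomputable def nu : Measure ℚ_[p] := Measure.addHaarMeasure (unitBallPC p)

instance : (nu p).IsAddHaarMeasure := Measure.isAddHaarMeasure_addHaarMeasure _

lemma nu_step (k : ℤ) :
    nu p (closedBall (0:ℚ_[p]) ((p:ℝ)^(k+1))) = p * nu p (closedBall (0:ℚ_[p]) ((p:ℝ)^k)) := by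
  have hpR : (0:ℝ) < p := hp0 p
  rw [ball_eq_union]
  have hset : ∀ i : Fin p, {x : ℚ_[p] | ‖x - (i : ℚ_[p]) * (p:ℚ_[p])^(-(k+1))‖ ≤ (p:ℝ)^k} =
      (fun x => -((i : ℚ_[p]) * (p:ℚ_[p])^(-(k+1))) + x) ⁻¹' closedBall 0 ((p:ℝ)^k) := by
    intro i
    ext x
    simp [mem_closedBall, dist_eq_norm, sub_eq_neg_add, add_comm]
  have hmeas : ∀ i : Fin p, MeasurableSet
      {x : ℚ_[p] | ‖x - (i : ℚ_[p]) * (p:ℚ_[p])^(-(k+1))‖ ≤ (p:ℝ)^k} := by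
    intro i
    rw [hset]
    exact (measurableSet_closedBall).preimage (measurable_const_add _)
  have hdisj : Pairwise (Function.onFun Disjoint
      (fun i : Fin p => {x : ℚ_[p] | ‖x - (i : ℚ_[p]) * (p:ℚ_[p])^(-(k+1))‖ ≤ (p:ℝ)^k})) := by
    intro i j hij
    rw [Function.onFun, Set.disjoint_left]
    intro x hxi hxj
    simp only [Set.mem_setOf_eq] at hxi hxj
    have hnorm : ‖(i:ℚ_[p]) * (p:ℚ_[p])^(-(k+1)) - (j:ℚ_[p]) * (p:ℚ_[p])^(-(k+1))‖
        = (p:ℝ)^(k+1) := by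
      have : (i:ℚ_[p]) * (p:ℚ_[p])^(-(k+1)) - (j:ℚ_[p]) * (p:ℚ_[p])^(-(k+1))
          = (((i:ℤ) - (j:ℤ) : ℤ) : ℚ_[p]) * (p:ℚ_[p])^(-(k+1)) := by push_cast; ring
      rw [this, norm_mul, Padic.norm_p_zpow]
      have h1 : ‖(((i:ℤ) - (j:ℤ) : ℤ) : ℚ_[p])‖ = 1 := by
        rcases lt_or_eq_of_le (Padic.norm_int_le_one (p := p) ((i:ℤ) - (j:ℤ))) with h | h
        · exfalso
          rw [Padic.norm_intCast_lt_one_iff] at h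
          have hne : (i:ℤ) - (j:ℤ) ≠ 0 := by
            simp only [sub_ne_zero]
            exact_mod_cast fun hh => hij (Fin.ext (by exact_mod_cast hh))
          rcases h with ⟨m, hm⟩
          have hi := i.2; have hj := j.2
          have hpz : 0 < (p:ℤ) := by exact_mod_cast hp.out.pos
          have hb1 : -(p:ℤ) < (i:ℤ) - (j:ℤ) := by omega
          have hb2 : (i:ℤ) - (j:ℤ) < (p:ℤ) := by omega
          rcases lt_trichotomy m 0 with hm0|hm0|hm0
          · nlinarith
          · rw [hm0, mul_zero] at hm; exact hne hm
          · nlinarith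
        · exact h
      rw [h1, one_mul]; ring_nf
    have := Padic.nonarchimedean ((i:ℚ_[p]) * (p:ℚ_[p])^(-(k+1)) - x)
      (x - (j:ℚ_[p]) * (p:ℚ_[p])^(-(k+1)))
    rw [show (i:ℚ_[p]) * (p:ℚ_[p])^(-(k+1)) - x + (x - (j:ℚ_[p]) * (p:ℚ_[p])^(-(k+1)))
        = (i:ℚ_[p]) * (p:ℚ_[p])^(-(k+1)) - (j:ℚ_[p]) * (p:ℚ_[p])^(-(k+1)) by ring, hnorm] at this
    have hmax : max ‖(i:ℚ_[p]) * (p:ℚ_[p])^(-(k+1)) - x‖ ‖x - (j:ℚ_[p]) * (p:ℚ_[p])^(-(k+1))‖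
        ≤ (p:ℝ)^k := by
      apply max_le _ hxj
      rw [norm_sub_rev]; exact hxi
    have hlt : (p:ℝ)^k < (p:ℝ)^(k+1) := zpow_lt_zpow_right₀ (hp1 p) (by omega)
    linarith
  rw [measure_iUnion hdisj hmeas]
  have heach : ∀ i : Fin p,
      nu p {x : ℚ_[p] | ‖x - (i : ℚ_[p]) * (p:ℚ_[p])^(-(k+1))‖ ≤ (p:ℝ)^k}
        = nu p (closedBall (0:ℚ_[p]) ((p:ℝ)^k)) := by
    intro i
    rw [hset]
    exact measure_preimage_add _ _ _
  simp only [heach, tsum_fintype, Finset.sum_const, Finset.card_univ, Fintype.card_fin,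
    nsmul_eq_mul]

lemma nu_ball : ∀ k : ℤ, nu p (closedBall (0:ℚ_[p]) ((p:ℝ)^k)) = ENNReal.ofReal ((p:ℝ)^k) := by
  have hpR : (0:ℝ) < p := hp0 p
  have hp0' : (p : ℝ≥0∞) ≠ 0 := by exact_mod_cast Nat.cast_ne_zero.mpr hp.out.ne_zero
  have hptop : (p : ℝ≥0∞) ≠ ⊤ := ENNReal.natCast_ne_top p
  have base : nu p (closedBall (0:ℚ_[p]) ((p:ℝ)^(0:ℤ))) = ENNReal.ofReal ((p:ℝ)^(0:ℤ)) := by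
    simp only [zpow_zero, ENNReal.ofReal_one]
    exact Measure.addHaarMeasure_self
  have ofReal_step : ∀ k : ℤ, ENNReal.ofReal ((p:ℝ)^(k+1)) = p * ENNReal.ofReal ((p:ℝ)^k) := by
    intro k
    rw [zpow_add₀ (ne_of_gt hpR), zpow_one, mul_comm, ENNReal.ofReal_mul (by positivity)]
    congr 1
    simp [ENNReal.ofReal_natCast]
  intro k
  induction k using Int.induction_on with
  | zero => exact base
  | succ k ih => rw [nu_step, ih, ofReal_step]
  | pred k ih =>
    have := nu_step p (-(k:ℤ) - 1)
    rw [show (-(k:ℤ) - 1 + 1) = -(k:ℤ) by ring, ih] at this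
    have h2 := ofReal_step (-(k:ℤ) - 1)
    rw [show (-(k:ℤ) - 1 + 1) = -(k:ℤ) by ring] at h2
    have hps : (p:ℝ≥0∞) ≠ 0 := hp0'
    calc nu p (closedBall (0:ℚ_[p]) ((p:ℝ)^(-(k:ℤ)-1)))
        = (p : ℝ≥0∞)⁻¹ * ((p:ℝ≥0∞) * nu p (closedBall (0:ℚ_[p]) ((p:ℝ)^(-(k:ℤ)-1)))) := by
          rw [← mul_assoc, ENNReal.inv_mul_cancel hp0' hptop, one_mul]
      _ = (p : ℝ≥0∞)⁻¹ * ((p:ℝ≥0∞) * ENNReal.ofReal ((p:ℝ)^(-(k:ℤ)-1))) := by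
          rw [← this, ← h2]
      _ = ENNReal.ofReal ((p:ℝ)^(-(k:ℤ)-1)) := by
          rw [← mul_assoc, ENNReal.inv_mul_cancel hp0' hptop, one_mul]

noncomputable def pim (m : ℕ) : Measure (Fin m → ℚ_[p]) := Measure.pi (fun _ => nu p)

instance (m : ℕ) : (pim p m).IsAddHaarMeasure := Measure.pi.isAddHaarMeasure _

lemma pim_box (m : ℕ) (ρ : Fin m → ℤ) :
    pim p m (Set.pi Set.univ fun i => closedBall (0:ℚ_[p]) ((p:ℝ)^(ρ i)))
      = ∏ i, ENNReal.ofReal ((p:ℝ)^(ρ i)) := by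
  rw [pim, Measure.pi_pi]
  exact Finset.prod_congr rfl fun i _ => nu_ball p (ρ i)

lemma pim_cube (m : ℕ) (k : ℤ) :
    pim p m (closedBall (0 : Fin m → ℚ_[p]) ((p:ℝ)^k)) = ENNReal.ofReal ((p:ℝ)^k) ^ m := by
  rw [closedBall_pi _ (by positivity : (0:ℝ) ≤ (p:ℝ)^k)]
  have := pim_box p m (fun _ => k)
  simp only [Finset.prod_const, Finset.card_univ, Fintype.card_fin] at this
  simpa using this

lemma mu_eq_pim (m : ℕ) (μ : Measure (Fin m → ℚ_[p])) [μ.IsAddHaarMeasure]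
    (hμ : μ (closedBall (0 : Fin m → ℚ_[p]) 1) = 1) : μ = pim p m := by
  have h := Measure.isAddLeftInvariant_eq_smul μ (pim p m)
  have hcube : pim p m (closedBall (0 : Fin m → ℚ_[p]) 1) = 1 := by
    have := pim_cube p m 0
    simpa using this
  have hc : μ.addHaarScalarFactor (pim p m) • (1 : ℝ≥0∞) = 1 := by
    have := congrArg (fun ν : Measure (Fin m → ℚ_[p]) => ν (closedBall 0 1)) h
    simp only [Measure.smul_apply, hμ, hcube] at this
    exact this.symm
  have hc1 : μ.addHaarScalarFactor (pim p m) = 1 := by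
    have := hc
    simp only [ENNReal.smul_def, smul_eq_mul, mul_one] at this
    exact_mod_cast this
  rw [h, hc1, one_smul]

lemma pim_zero_set (m : ℕ) (hm : 1 ≤ m) : pim p m ({0} : Set (Fin m → ℚ_[p])) = 0 := by
  have h0 : ({0} : Set (Fin m → ℚ_[p])) = Set.pi Set.univ fun _ => ({0} : Set ℚ_[p]) := by
    ext x
    simp [funext_iff]
  rw [h0, pim, Measure.pi_pi]
  have : nu p ({0} : Set ℚ_[p]) = 0 := measure_singleton 0
  rw [this]
  simp [Finset.prod_const, zero_pow (by omega : m ≠ 0)]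

def negShiftEquiv (J : ℤ) : ℕ ≃ {j : ℤ // j ≤ J} where
  toFun := fun m => ⟨J - m, by omega⟩
  invFun := fun j => (J - j.1).toNat
  left_inv := fun m => by simp
  right_inv := fun j => by
    ext
    have := j.2
    simp
    omega

lemma summable_zpow_le (q : ℝ) (hq : 1 < q) (J : ℤ) :
    Summable (fun j : {j : ℤ // j ≤ J} => q ^ (j.1 : ℤ)) := by
  have hq0 : 0 < q := lt_trans one_pos hq
  rw [← (negShiftEquiv J).summable_iff]
  have hgeom : Summable (fun m : ℕ => q ^ J * (q⁻¹) ^ m) :=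
    (summable_geometric_of_lt_one (by positivity) (inv_lt_one_of_one_lt₀ hq)).mul_left _
  apply hgeom.congr
  intro m
  simp only [negShiftEquiv, Function.comp_apply, Equiv.coe_fn_mk]
  rw [zpow_sub₀ (ne_of_gt hq0), div_eq_mul_inv, ← inv_zpow, zpow_natCast]

lemma summable_indicator_zpow (q : ℝ) (hq : 1 < q) (J : ℤ) :
    Summable (Set.indicator {j : ℤ | j ≤ J} (fun j => q ^ j)) := by
  rw [← summable_subtype_iff_indicator]
  exact summable_zpow_le q hq J

lemma pi_norm_eq_pow (m : ℕ) (x : Fin m → ℚ_[p]) (R : ℤ) (h1 : ‖x‖ ≤ (p:ℝ)^R)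
    (h2 : ¬ ‖x‖ ≤ (p:ℝ)^(R-1)) : ‖x‖ = (p:ℝ)^R := by
  have hpR : (0:ℝ) < p := hp0 p
  push_neg at h2
  obtain ⟨i, hi⟩ : ∃ i, (p:ℝ)^(R-1) < ‖x i‖ := by
    by_contra h
    push_neg at h
    exact absurd ((pi_norm_le_iff_of_nonneg (by positivity)).mpr h) (not_le.mpr h2)
  have hxi : x i ≠ 0 := by
    intro h0
    rw [h0, norm_zero] at hi
    exact absurd hi (not_lt.mpr (by positivity))
  have hval : ‖x i‖ = (p:ℝ) ^ (-(x i).valuation) := Padic.norm_eq_zpow_neg_valuation hxi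
  have hle : ‖x i‖ ≤ (p:ℝ)^R := le_trans (norm_le_pi_norm x i) h1
  have h1p : (1:ℝ) < p := hp1 p
  have hv1 : -(x i).valuation ≤ R := by
    rw [hval] at hle
    exact (zpow_le_zpow_iff_right₀ h1p).mp hle
  have hv2 : R - 1 < -(x i).valuation := by
    rw [hval] at hi
    exact (zpow_lt_zpow_iff_right₀ h1p).mp hi
  have hvR : -(x i).valuation = R := by omega
  apply le_antisymm h1
  calc (p:ℝ)^R = ‖x i‖ := by rw [hval, hvR]
    _ ≤ ‖x‖ := norm_le_pi_norm x i

lemma measE (n : ℕ) (a : ℚ_[p]) (u s : ℤ) :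
    pim p (n+1) {x : Fin (n+1) → ℚ_[p] | ‖x 0 - a‖ ≤ (p:ℝ)^u ∧ ‖Fin.tail x‖ ≤ (p:ℝ)^s}
      = ENNReal.ofReal ((p:ℝ)^u) * ENNReal.ofReal ((p:ℝ)^s) ^ n := by
  have hpR : (0:ℝ) < p := hp0 p
  set av : Fin (n+1) → ℚ_[p] := Fin.cons a 0 with hav
  set ρ : Fin (n+1) → ℤ := Fin.cons u (fun _ => s) with hρ
  have hset : {x : Fin (n+1) → ℚ_[p] | ‖x 0 - a‖ ≤ (p:ℝ)^u ∧ ‖Fin.tail x‖ ≤ (p:ℝ)^s}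
      = (fun x => -av + x) ⁻¹' (Set.pi Set.univ fun i => closedBall (0:ℚ_[p]) ((p:ℝ)^(ρ i))) := by
    ext x
    simp only [Set.mem_setOf_eq, Set.mem_preimage, Set.mem_pi, Set.mem_univ, forall_true_left,
      mem_closedBall, dist_zero_right, Pi.add_apply, Pi.neg_apply, true_implies]
    constructor
    · rintro ⟨h1, h2⟩ i
      refine Fin.cases ?_ (fun j => ?_) i
      · simpa [hav, hρ, neg_add_eq_sub] using h1
      · have := (pi_norm_le_iff_of_nonneg (by positivity : (0:ℝ) ≤ (p:ℝ)^s)).mp h2 j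
        simpa [hav, hρ, Fin.tail, neg_add_eq_sub] using this
    · intro h
      constructor
      · simpa [hav, hρ, neg_add_eq_sub] using h 0
      · rw [pi_norm_le_iff_of_nonneg (by positivity : (0:ℝ) ≤ (p:ℝ)^s)]
        intro j
        have := h j.succ
        simpa [hav, hρ, Fin.tail, neg_add_eq_sub] using this
  rw [hset, measure_preimage_add, pim_box]
  rw [Fin.prod_univ_succ]
  simp [hρ]

lemma measE_measurable (n : ℕ) (a : ℚ_[p]) (u s : ℤ) :
    MeasurableSet {x : Fin (n+1) → ℚ_[p] | ‖x 0 - a‖ ≤ (p:ℝ)^u ∧ ‖Fin.tail x‖ ≤ (p:ℝ)^s} := by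
  have h1 : MeasurableSet {x : Fin (n+1) → ℚ_[p] | ‖x 0 - a‖ ≤ (p:ℝ)^u} := by
    have : Continuous fun x : Fin (n+1) → ℚ_[p] => x 0 - a :=
      (continuous_apply 0).sub continuous_const
    exact measurableSet_le (this.norm.measurable) measurable_const
  have h2 : MeasurableSet {x : Fin (n+1) → ℚ_[p] | ‖Fin.tail x‖ ≤ (p:ℝ)^s} := by
    have : Continuous fun x : Fin (n+1) → ℚ_[p] => Fin.tail x := by
      continuity
    exact measurableSet_le (this.norm.measurable) measurable_const
  exact h1.inter h2

noncomputable def Cf (σ b t : ℝ) (j : ℤ) : ℝ :=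
  Real.exp (-(σ * t * (p : ℝ) ^ ((j : ℝ) * b))) -
    Real.exp (-(σ * t * (p : ℝ) ^ (((j : ℝ) + 1) * b)))

lemma Cf_pos (σ b t : ℝ) (hσ : 0 < σ) (hb : 0 < b) (ht : 0 < t) (j : ℤ) :
    0 < Cf p σ b t j := by
  have h1p : (1:ℝ) < p := hp1 p
  rw [Cf, sub_pos, Real.exp_lt_exp, neg_lt_neg_iff]
  have hlt : (p:ℝ) ^ ((j:ℝ) * b) < (p:ℝ) ^ (((j:ℝ)+1) * b) := by
    rw [Real.rpow_lt_rpow_left_iff h1p]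
    nlinarith
  exact mul_lt_mul_of_pos_left hlt (mul_pos hσ ht)

lemma Cf_le_one (σ b t : ℝ) (hσ : 0 < σ) (hb : 0 < b) (ht : 0 < t) (j : ℤ) :
    Cf p σ b t j ≤ 1 := by
  have h2 : (0:ℝ) < Real.exp (-(σ * t * (p : ℝ) ^ (((j : ℝ) + 1) * b))) := Real.exp_pos _
  have h3 : Real.exp (-(σ * t * (p : ℝ) ^ ((j : ℝ) * b))) ≤ 1 := by
    rw [Real.exp_le_one_iff]
    have h4 : (0:ℝ) < (p:ℝ) ^ ((j:ℝ) * b) := Real.rpow_pos_of_pos (hp0 p) _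
    nlinarith [mul_pos (mul_pos hσ ht) h4]
  rw [Cf]; linarith

lemma rho_term_nonneg (σ b t : ℝ) (hσ : 0 < σ) (hb : 0 < b) (ht : 0 < t) (d : ℕ) (j : ℤ)
    (x : Fin d → ℚ_[p]) :
    0 ≤ Cf p σ b t j * (p:ℝ) ^ ((d:ℤ) * j) *
      Set.indicator (closedBall (0 : Fin d → ℚ_[p]) ((p : ℝ) ^ (-j))) (fun _ => (1:ℝ)) x := by
  have h1 := Cf_pos p σ b t hσ hb ht j
  have h2 : (0:ℝ) ≤ (p:ℝ) ^ ((d:ℤ) * j) := by positivity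
  by_cases hx : x ∈ closedBall (0 : Fin d → ℚ_[p]) ((p : ℝ) ^ (-j))
  · rw [Set.indicator_of_mem hx]; nlinarith
  · rw [Set.indicator_of_notMem hx]; simp

lemma rho_summable (σ b t : ℝ) (hσ : 0 < σ) (hb : 0 < b) (ht : 0 < t) (d : ℕ) (hd : 1 ≤ d)
    (x : Fin d → ℚ_[p]) (hx : x ≠ 0) :
    Summable (fun j : ℤ => Cf p σ b t j * (p:ℝ) ^ ((d:ℤ) * j) *
      Set.indicator (closedBall (0 : Fin d → ℚ_[p]) ((p : ℝ) ^ (-j))) (fun _ => (1:ℝ)) x) := by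
  have h1p : (1:ℝ) < p := hp1 p
  have hxnorm : 0 < ‖x‖ := norm_pos_iff.mpr hx
  -- choose J with p^(-J) < ‖x‖
  obtain ⟨m, hm⟩ : ∃ m : ℕ, ((p:ℝ)⁻¹) ^ m < ‖x‖ :=
    exists_pow_lt_of_lt_one hxnorm (inv_lt_one_of_one_lt₀ h1p)
  set J : ℤ := (m : ℤ) with hJ
  have hJlt : (p:ℝ) ^ (-J) < ‖x‖ := by
    rw [zpow_neg, ← inv_zpow, zpow_natCast]
    exact hm
  have hq : (1:ℝ) < (p:ℝ) ^ (d:ℤ) := one_lt_zpow₀ h1p (by omega)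
  refine Summable.of_nonneg_of_le (f := Set.indicator {j : ℤ | j ≤ J} (fun j => ((p:ℝ) ^ (d:ℤ)) ^ j))
    (fun j => rho_term_nonneg p σ b t hσ hb ht d j x) ?_
    (summable_indicator_zpow ((p:ℝ) ^ (d:ℤ)) hq J)
  · intro j
    by_cases hj : j ≤ J
    · rw [Set.indicator_of_mem (show j ∈ {j : ℤ | j ≤ J} from hj)]
      have hCf1 := Cf_le_one p σ b t hσ hb ht j
      have hCf0 := Cf_pos p σ b t hσ hb ht j
      have hind : Set.indicator (closedBall (0 : Fin d → ℚ_[p]) ((p : ℝ) ^ (-j)))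
          (fun _ => (1:ℝ)) x ≤ 1 := by
        by_cases hxm : x ∈ closedBall (0 : Fin d → ℚ_[p]) ((p : ℝ) ^ (-j))
        · rw [Set.indicator_of_mem hxm]
        · rw [Set.indicator_of_notMem hxm]; norm_num
      have hpw : (0:ℝ) ≤ (p:ℝ) ^ ((d:ℤ) * j) := by positivity
      have hindnn : 0 ≤ Set.indicator (closedBall (0 : Fin d → ℚ_[p]) ((p : ℝ) ^ (-j)))
          (fun _ => (1:ℝ)) x := Set.indicator_nonneg (fun _ _ => zero_le_one) x
      calc Cf p σ b t j * (p:ℝ) ^ ((d:ℤ) * j) * _ ≤ 1 * (p:ℝ) ^ ((d:ℤ) * j) * 1 := by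
            apply mul_le_mul _ hind hindnn (by positivity)
            exact mul_le_mul hCf1 le_rfl hpw zero_le_one
        _ = ((p:ℝ) ^ (d:ℤ)) ^ j := by rw [one_mul, mul_one, ← zpow_mul]
    · rw [Set.indicator_of_notMem (show j ∉ {j : ℤ | j ≤ J} from hj)]
      have hxm : x ∉ closedBall (0 : Fin d → ℚ_[p]) ((p : ℝ) ^ (-j)) := by
        rw [mem_closedBall_zero_iff]
        push_neg
        calc (p:ℝ) ^ (-j) < (p:ℝ) ^ (-J) := by
              apply zpow_lt_zpow_right₀ h1p; omega
          _ < ‖x‖ := hJlt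
      rw [Set.indicator_of_notMem hxm, mul_zero]

lemma Cf_def (σ b t : ℝ) (j : ℤ) :
    Real.exp (-(σ * t * (p : ℝ) ^ ((j : ℝ) * b))) -
      Real.exp (-(σ * t * (p : ℝ) ^ (((j : ℝ) + 1) * b))) = Cf p σ b t j := rfl

lemma integral_rho (σ b t : ℝ) (hσ : 0 < σ) (hb : 0 < b) (ht : 0 < t) (n : ℕ)
    (A : Set (Fin (n+1) → ℚ_[p])) (hA : MeasurableSet A) :
    ∫⁻ x in A, ENNReal.ofReal (rho p σ b (n+1) t x) ∂(pim p (n+1))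
      = ∑' j : ℤ, ENNReal.ofReal (Cf p σ b t j * (p:ℝ) ^ (((n+1:ℕ):ℤ) * j))
          * pim p (n+1) (A ∩ closedBall (0 : Fin (n+1) → ℚ_[p]) ((p:ℝ)^(-j))) := by
  have hpt : ∀ x : Fin (n+1) → ℚ_[p], x ≠ 0 →
      ENNReal.ofReal (rho p σ b (n+1) t x) = ∑' j : ℤ,
        Set.indicator (closedBall (0 : Fin (n+1) → ℚ_[p]) ((p:ℝ)^(-j)))
          (fun _ => ENNReal.ofReal (Cf p σ b t j * (p:ℝ) ^ (((n+1:ℕ):ℤ) * j))) x := by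
    intro x hx
    have hsum := rho_summable p σ b t hσ hb ht (n+1) (by omega) x hx
    rw [rho]
    simp only [Cf_def]
    rw [ENNReal.ofReal_tsum_of_nonneg (fun j => rho_term_nonneg p σ b t hσ hb ht (n+1) j x) hsum]
    apply tsum_congr
    intro j
    by_cases hxm : x ∈ closedBall (0 : Fin (n+1) → ℚ_[p]) ((p : ℝ) ^ (-j))
    · simp only [Set.indicator_of_mem hxm, mul_one]
    · simp only [Set.indicator_of_notMem hxm, mul_zero, ENNReal.ofReal_zero]
  have hae : ∀ᵐ x ∂((pim p (n+1)).restrict A),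
      ENNReal.ofReal (rho p σ b (n+1) t x) = ∑' j : ℤ,
        Set.indicator (closedBall (0 : Fin (n+1) → ℚ_[p]) ((p:ℝ)^(-j)))
          (fun _ => ENNReal.ofReal (Cf p σ b t j * (p:ℝ) ^ (((n+1:ℕ):ℤ) * j))) x := by
    have hsub : {x : Fin (n+1) → ℚ_[p] | ¬ (ENNReal.ofReal (rho p σ b (n+1) t x) = ∑' j : ℤ,
        Set.indicator (closedBall (0 : Fin (n+1) → ℚ_[p]) ((p:ℝ)^(-j)))
          (fun _ => ENNReal.ofReal (Cf p σ b t j * (p:ℝ) ^ (((n+1:ℕ):ℤ) * j))) x)}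
        ⊆ {0} := by
      intro x hxm
      by_contra hx0
      exact hxm (hpt x (by simpa using hx0))
    have h0 : (pim p (n+1)).restrict A {(0 : Fin (n+1) → ℚ_[p])} = 0 := by
      apply le_antisymm _ zero_le
      calc (pim p (n+1)).restrict A {(0 : Fin (n+1) → ℚ_[p])}
          ≤ pim p (n+1) {(0 : Fin (n+1) → ℚ_[p])} := Measure.restrict_apply_le _ _
        _ = 0 := pim_zero_set p (n+1) (by omega)
    exact ae_iff.mpr (measure_mono_null hsub h0)
  rw [lintegral_congr_ae hae]
  rw [lintegral_tsum (fun j => ((measurable_const.indicator measurableSet_closedBall).aemeasurable))]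
  apply tsum_congr
  intro j
  rw [lintegral_indicator measurableSet_closedBall, setLIntegral_const,
    Measure.restrict_apply measurableSet_closedBall, Set.inter_comm]

section Sets
variable {n : ℕ} {r R : ℤ} {a : ℚ_[p]}

lemma zpow_le_p (h : (u:ℤ) ≤ v) : (p:ℝ)^u ≤ (p:ℝ)^v := zpow_le_zpow_right₀ (le_of_lt (hp1 p)) h

lemma inter_empty_of_gt (j : ℤ) (hj : -R < j) (A : Set (Fin (n+1) → ℚ_[p]))
    (hA : A ⊆ {x | ‖Fin.tail x‖ = (p:ℝ)^R}) :
    A ∩ closedBall (0 : Fin (n+1) → ℚ_[p]) ((p:ℝ)^(-j)) = ∅ := by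
  ext x
  simp only [Set.mem_inter_iff, Set.mem_empty_iff_false, iff_false, not_and]
  intro hxA hxB
  have h1 : ‖Fin.tail x‖ = (p:ℝ)^R := hA hxA
  rw [mem_closedBall_zero_iff] at hxB
  have h2 : ‖Fin.tail x‖ ≤ (p:ℝ)^(-j) := by
    rw [pi_norm_le_iff_of_nonneg (by positivity)]
    intro i
    exact le_trans (norm_le_pi_norm x i.succ) hxB
  have h3 : (p:ℝ)^(-j) < (p:ℝ)^R := zpow_lt_zpow_right₀ (hp1 p) (by omega)
  rw [h1] at h2
  linarith

lemma num_inter (j : ℤ) (hj : j ≤ -R) (hrR : r ≤ R) (ha : ‖a‖ ≤ (p:ℝ)^R) :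
    ({x : Fin (n+1) → ℚ_[p] | ‖x 0 - a‖ ≤ (p : ℝ) ^ r} ∩
        {x : Fin (n+1) → ℚ_[p] | ‖Fin.tail x‖ = (p : ℝ) ^ R}) ∩
      closedBall (0 : Fin (n+1) → ℚ_[p]) ((p:ℝ)^(-j)) =
    {x : Fin (n+1) → ℚ_[p] | ‖x 0 - a‖ ≤ (p:ℝ)^r ∧ ‖Fin.tail x‖ ≤ (p:ℝ)^R} \
      {x : Fin (n+1) → ℚ_[p] | ‖x 0 - a‖ ≤ (p:ℝ)^r ∧ ‖Fin.tail x‖ ≤ (p:ℝ)^(R-1)} := by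
  have h1p : (1:ℝ) < p := hp1 p
  ext x
  simp only [Set.mem_inter_iff, Set.mem_setOf_eq, Set.mem_diff, mem_closedBall_zero_iff]
  constructor
  · rintro ⟨⟨h1, h2⟩, h3⟩
    refine ⟨⟨h1, le_of_eq h2⟩, ?_⟩
    rintro ⟨-, h4⟩
    have : (p:ℝ)^(R-1:ℤ) < (p:ℝ)^R := zpow_lt_zpow_right₀ h1p (by omega)
    rw [h2] at h4
    linarith
  · rintro ⟨⟨h1, h2⟩, h3⟩
    have h4 : ¬ ‖Fin.tail x‖ ≤ (p:ℝ)^(R-1:ℤ) := fun hc => h3 ⟨h1, hc⟩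
    have heq : ‖Fin.tail x‖ = (p:ℝ)^R := pi_norm_eq_pow p n (Fin.tail x) R h2 h4
    refine ⟨⟨h1, heq⟩, ?_⟩
    rw [pi_norm_le_iff_of_nonneg (by positivity)]
    intro i
    refine Fin.cases ?_ (fun i' => ?_) i
    · have hna : ‖x 0‖ ≤ max ‖x 0 - a‖ ‖a‖ := by
        have := Padic.nonarchimedean (x 0 - a) a
        simpa using this
      have : ‖x 0‖ ≤ (p:ℝ)^R :=
        le_trans hna (max_le (le_trans h1 (zpow_le_p p hrR)) ha)
      exact le_trans this (zpow_le_p p (by omega))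
    · have : ‖x i'.succ‖ ≤ ‖Fin.tail x‖ := norm_le_pi_norm (Fin.tail x) i'
      rw [heq] at this
      exact le_trans this (zpow_le_p p (by omega))

lemma den_inter (j : ℤ) (hj : j ≤ -R) :
    {x : Fin (n+1) → ℚ_[p] | ‖Fin.tail x‖ = (p : ℝ) ^ R} ∩
      closedBall (0 : Fin (n+1) → ℚ_[p]) ((p:ℝ)^(-j)) =
    {x : Fin (n+1) → ℚ_[p] | ‖x 0 - 0‖ ≤ (p:ℝ)^(-j) ∧ ‖Fin.tail x‖ ≤ (p:ℝ)^R} \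
      {x : Fin (n+1) → ℚ_[p] | ‖x 0 - 0‖ ≤ (p:ℝ)^(-j) ∧ ‖Fin.tail x‖ ≤ (p:ℝ)^(R-1)} := by
  have h1p : (1:ℝ) < p := hp1 p
  ext x
  simp only [Set.mem_inter_iff, Set.mem_setOf_eq, Set.mem_diff, mem_closedBall_zero_iff, sub_zero]
  constructor
  · rintro ⟨h1, h2⟩
    have hx0 : ‖x 0‖ ≤ (p:ℝ)^(-j) := le_trans (norm_le_pi_norm x 0) h2
    have htl : ‖Fin.tail x‖ ≤ (p:ℝ)^R := le_of_eq h1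
    refine ⟨⟨hx0, htl⟩, ?_⟩
    rintro ⟨-, h4⟩
    have : (p:ℝ)^(R-1:ℤ) < (p:ℝ)^R := zpow_lt_zpow_right₀ h1p (by omega)
    rw [h1] at h4
    linarith
  · rintro ⟨⟨h1, h2⟩, h3⟩
    have h4 : ¬ ‖Fin.tail x‖ ≤ (p:ℝ)^(R-1:ℤ) := fun hc => h3 ⟨h1, hc⟩
    have heq : ‖Fin.tail x‖ = (p:ℝ)^R := pi_norm_eq_pow p n (Fin.tail x) R h2 h4
    refine ⟨heq, ?_⟩
    rw [pi_norm_le_iff_of_nonneg (by positivity)]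
    intro i
    refine Fin.cases ?_ (fun i' => ?_) i
    · exact h1
    · have : ‖x i'.succ‖ ≤ ‖Fin.tail x‖ := norm_le_pi_norm (Fin.tail x) i'
      rw [heq] at this
      exact le_trans this (zpow_le_p p (by omega))

end Sets

lemma measE_diff (n : ℕ) (a : ℚ_[p]) (u R : ℤ) :
    pim p (n+1) ({x : Fin (n+1) → ℚ_[p] | ‖x 0 - a‖ ≤ (p:ℝ)^u ∧ ‖Fin.tail x‖ ≤ (p:ℝ)^R} \
      {x : Fin (n+1) → ℚ_[p] | ‖x 0 - a‖ ≤ (p:ℝ)^u ∧ ‖Fin.tail x‖ ≤ (p:ℝ)^(R-1)})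
    = ENNReal.ofReal ((p:ℝ)^u * ((p:ℝ)^((n:ℤ)*R) - (p:ℝ)^((n:ℤ)*(R-1)))) := by
  have hpR : (0:ℝ) < p := hp0 p
  have hsub : {x : Fin (n+1) → ℚ_[p] | ‖x 0 - a‖ ≤ (p:ℝ)^u ∧ ‖Fin.tail x‖ ≤ (p:ℝ)^(R-1)}
      ⊆ {x : Fin (n+1) → ℚ_[p] | ‖x 0 - a‖ ≤ (p:ℝ)^u ∧ ‖Fin.tail x‖ ≤ (p:ℝ)^R} :=
    fun x ⟨h1, h2⟩ => ⟨h1, le_trans h2 (zpow_le_p p (by omega))⟩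
  have hfin : pim p (n+1) {x : Fin (n+1) → ℚ_[p] | ‖x 0 - a‖ ≤ (p:ℝ)^u ∧
      ‖Fin.tail x‖ ≤ (p:ℝ)^(R-1)} ≠ ⊤ := by
    rw [measE]
    exact ENNReal.mul_ne_top ENNReal.ofReal_ne_top (ENNReal.pow_ne_top ENNReal.ofReal_ne_top)
  rw [measure_diff hsub ((measE_measurable p n a u (R-1)).nullMeasurableSet) hfin, measE, measE]
  have hzp : ∀ s : ℤ, (ENNReal.ofReal ((p:ℝ)^s)) ^ n = ENNReal.ofReal ((p:ℝ)^((n:ℤ)*s)) := by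
    intro s
    rw [← ENNReal.ofReal_pow (by positivity)]
    congr 1
    rw [← zpow_natCast ((p:ℝ)^s) n, ← zpow_mul, mul_comm]
  rw [hzp, hzp, ← ENNReal.ofReal_mul (by positivity), ← ENNReal.ofReal_mul (by positivity),
    ← ENNReal.ofReal_sub _ (by positivity)]
  congr 1
  ring

lemma summable_Cf (σ b t : ℝ) (hσ : 0 < σ) (hb : 0 < b) (ht : 0 < t) (k : ℤ) (hk : 1 ≤ k)
    (J : ℤ) : Summable (fun j : {j : ℤ // j ≤ J} => Cf p σ b t j.1 * (p:ℝ)^(k * j.1)) := by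
  have h1p : (1:ℝ) < p := hp1 p
  have hq : (1:ℝ) < (p:ℝ) ^ k := one_lt_zpow₀ h1p (by omega)
  refine Summable.of_nonneg_of_le
    (fun j => mul_nonneg (le_of_lt (Cf_pos p σ b t hσ hb ht j.1)) (by positivity)) ?_
    (summable_zpow_le ((p:ℝ)^k) hq J)
  intro j
  calc Cf p σ b t j.1 * (p:ℝ)^(k * j.1) ≤ 1 * (p:ℝ)^(k * j.1) :=
        mul_le_mul_of_nonneg_right (Cf_le_one p σ b t hσ hb ht j.1) (by positivity)
    _ = ((p:ℝ)^k) ^ (j.1 : ℤ) := by rw [one_mul, zpow_mul]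

end AuxPadicHaar

/-- Conditional probability for the max-norm Brownian motion at time `t` in dimension
`d = n+1 ≥ 2`: given that the last `n` coordinates lie on the sphere `S_{d−1}(R)`, the
probability that the first coordinate lies in `B(r,a)` (with `r ≤ R`, `a ∈ B(R)`) is
`p^r · G(R,d,t)/G(R,d−1,t)`, where
`G(R,k,t) = Σ_{j ≤ −R}(e^{−σt p^{jb}} − e^{−σt p^{(j+1)b}}) p^{kj}`. -/
theorem conditional_component_probability (p : ℕ) [Fact p.Prime] (σ b t : ℝ)
    (hσ : 0 < σ) (hb : 0 < b) (ht : 0 < t) (n : ℕ) (hn : 1 ≤ n) (r R : ℤ) (hrR : r ≤ R)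
    (a : ℚ_[p]) (ha : ‖a‖ ≤ (p : ℝ) ^ R)
    (μ : Measure (Fin (n + 1) → ℚ_[p])) [μ.IsAddHaarMeasure]
    (hμ : μ (closedBall (0 : Fin (n + 1) → ℚ_[p]) 1) = 1) :
    (μ.withDensity (fun x => ENNReal.ofReal (rho p σ b (n + 1) t x)))
        ({x : Fin (n + 1) → ℚ_[p] | ‖x 0 - a‖ ≤ (p : ℝ) ^ r} ∩
          {x : Fin (n + 1) → ℚ_[p] | ‖Fin.tail x‖ = (p : ℝ) ^ R}) /
      (μ.withDensity (fun x => ENNReal.ofReal (rho p σ b (n + 1) t x)))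
        {x : Fin (n + 1) → ℚ_[p] | ‖Fin.tail x‖ = (p : ℝ) ^ R} =
    ENNReal.ofReal ((p : ℝ) ^ r *
      ((∑' j : {j : ℤ // j ≤ -R},
          (Real.exp (-(σ * t * (p : ℝ) ^ ((j.1 : ℝ) * b))) -
              Real.exp (-(σ * t * (p : ℝ) ^ (((j.1 : ℝ) + 1) * b)))) *
            (p : ℝ) ^ (((n : ℤ) + 1) * j.1)) /
        (∑' j : {j : ℤ // j ≤ -R},
          (Real.exp (-(σ * t * (p : ℝ) ^ ((j.1 : ℝ) * b))) -
              Real.exp (-(σ * t * (p : ℝ) ^ (((j.1 : ℝ) + 1) * b)))) *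
            (p : ℝ) ^ ((n : ℤ) * j.1)))) := by
  have h1p : (1:ℝ) < p := hp1 p
  have hμpi := mu_eq_pim p (n+1) μ hμ
  -- measurability
  have hmeas1 : MeasurableSet {x : Fin (n + 1) → ℚ_[p] | ‖x 0 - a‖ ≤ (p : ℝ) ^ r} := by
    have : Continuous fun x : Fin (n+1) → ℚ_[p] => x 0 - a :=
      (continuous_apply 0).sub continuous_const
    exact measurableSet_le (this.norm.measurable) measurable_const
  have hmeas2 : MeasurableSet {x : Fin (n + 1) → ℚ_[p] | ‖Fin.tail x‖ = (p : ℝ) ^ R} := by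
    have hc : Continuous fun x : Fin (n+1) → ℚ_[p] => ‖Fin.tail x‖ := by
      have : Continuous fun x : Fin (n+1) → ℚ_[p] => Fin.tail x := by continuity
      exact this.norm
    exact hc.measurable (measurableSet_singleton ((p:ℝ)^R))
  set W : ℝ := (p:ℝ)^((n:ℤ)*R) - (p:ℝ)^((n:ℤ)*(R-1)) with hWdef
  have hW0 : 0 < W := by
    rw [hWdef, sub_pos]
    apply zpow_lt_zpow_right₀ h1p
    have : (1:ℤ) ≤ n := by exact_mod_cast hn
    nlinarith
  -- numerator
  have hnum : (μ.withDensity (fun x => ENNReal.ofReal (rho p σ b (n + 1) t x)))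
        ({x : Fin (n + 1) → ℚ_[p] | ‖x 0 - a‖ ≤ (p : ℝ) ^ r} ∩
          {x : Fin (n + 1) → ℚ_[p] | ‖Fin.tail x‖ = (p : ℝ) ^ R})
      = ENNReal.ofReal ((∑' j : {j : ℤ // j ≤ -R},
          Cf p σ b t j.1 * (p:ℝ) ^ (((n:ℤ)+1) * j.1)) * ((p:ℝ)^r * W)) := by
    rw [hμpi, withDensity_apply _ (hmeas1.inter hmeas2),
      integral_rho p σ b t hσ hb ht n _ (hmeas1.inter hmeas2)]
    have hsupp : Function.support (fun j : ℤ =>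
        ENNReal.ofReal (Cf p σ b t j * (p:ℝ) ^ (((n+1:ℕ):ℤ) * j))
          * pim p (n+1) (({x : Fin (n + 1) → ℚ_[p] | ‖x 0 - a‖ ≤ (p : ℝ) ^ r} ∩
            {x : Fin (n + 1) → ℚ_[p] | ‖Fin.tail x‖ = (p : ℝ) ^ R}) ∩
            closedBall (0 : Fin (n+1) → ℚ_[p]) ((p:ℝ)^(-j)))) ⊆ {j : ℤ | j ≤ -R} := by
      intro j hj
      simp only [Function.mem_support] at hj
      simp only [Set.mem_setOf_eq]
      by_contra hjR
      push_neg at hjR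
      apply hj
      rw [inter_empty_of_gt p j (by omega) _ Set.inter_subset_right]
      simp
    rw [← tsum_subtype_eq_of_support_subset hsupp]
    have hterm : ∀ j : ↑{j : ℤ | j ≤ -R},
        ENNReal.ofReal (Cf p σ b t j.1 * (p:ℝ) ^ (((n+1:ℕ):ℤ) * j.1))
          * pim p (n+1) (({x : Fin (n + 1) → ℚ_[p] | ‖x 0 - a‖ ≤ (p : ℝ) ^ r} ∩
            {x : Fin (n + 1) → ℚ_[p] | ‖Fin.tail x‖ = (p : ℝ) ^ R}) ∩
            closedBall (0 : Fin (n+1) → ℚ_[p]) ((p:ℝ)^(-j.1)))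
        = ENNReal.ofReal ((Cf p σ b t j.1 * (p:ℝ) ^ (((n:ℤ)+1) * j.1)) * ((p:ℝ)^r * W)) := by
      intro j
      rw [num_inter p j.1 j.2 hrR ha, measE_diff]
      rw [← ENNReal.ofReal_mul (mul_nonneg (le_of_lt (Cf_pos p σ b t hσ hb ht j.1))
        (by positivity))]
      congr 1
      all_goals (push_cast; try ring)
    rw [tsum_congr hterm]
    rw [← ENNReal.ofReal_tsum_of_nonneg
      (fun j : ↑{j : ℤ | j ≤ -R} => mul_nonneg (mul_nonneg
        (le_of_lt (Cf_pos p σ b t hσ hb ht j.1)) (by positivity)) (by positivity))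
      ((summable_Cf p σ b t hσ hb ht ((n:ℤ)+1) (by omega) (-R)).mul_right _)]
    rw [tsum_mul_right]
    rfl
  -- denominator
  have hden : (μ.withDensity (fun x => ENNReal.ofReal (rho p σ b (n + 1) t x)))
        {x : Fin (n + 1) → ℚ_[p] | ‖Fin.tail x‖ = (p : ℝ) ^ R}
      = ENNReal.ofReal ((∑' j : {j : ℤ // j ≤ -R},
          Cf p σ b t j.1 * (p:ℝ) ^ ((n:ℤ) * j.1)) * W) := by
    rw [hμpi, withDensity_apply _ hmeas2, integral_rho p σ b t hσ hb ht n _ hmeas2]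
    have hsupp : Function.support (fun j : ℤ =>
        ENNReal.ofReal (Cf p σ b t j * (p:ℝ) ^ (((n+1:ℕ):ℤ) * j))
          * pim p (n+1) ({x : Fin (n + 1) → ℚ_[p] | ‖Fin.tail x‖ = (p : ℝ) ^ R} ∩
            closedBall (0 : Fin (n+1) → ℚ_[p]) ((p:ℝ)^(-j)))) ⊆ {j : ℤ | j ≤ -R} := by
      intro j hj
      simp only [Function.mem_support] at hj
      simp only [Set.mem_setOf_eq]
      by_contra hjR
      push_neg at hjR
      apply hj
      rw [inter_empty_of_gt p j (by omega) _ (fun x hx => hx)]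
      simp
    rw [← tsum_subtype_eq_of_support_subset hsupp]
    have hterm : ∀ j : ↑{j : ℤ | j ≤ -R},
        ENNReal.ofReal (Cf p σ b t j.1 * (p:ℝ) ^ (((n+1:ℕ):ℤ) * j.1))
          * pim p (n+1) ({x : Fin (n + 1) → ℚ_[p] | ‖Fin.tail x‖ = (p : ℝ) ^ R} ∩
            closedBall (0 : Fin (n+1) → ℚ_[p]) ((p:ℝ)^(-j.1)))
        = ENNReal.ofReal ((Cf p σ b t j.1 * (p:ℝ) ^ ((n:ℤ) * j.1)) * W) := by
      intro j
      rw [den_inter p j.1 j.2, measE_diff]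
      rw [← ENNReal.ofReal_mul (mul_nonneg (le_of_lt (Cf_pos p σ b t hσ hb ht j.1))
        (by positivity))]
      congr 1
      have hzp : (p:ℝ) ^ (((n+1:ℕ):ℤ) * j.1) * (p:ℝ)^(-j.1) = (p:ℝ)^((n:ℤ) * j.1) := by
        rw [← zpow_add₀ (by positivity : (p:ℝ) ≠ 0)]
        congr 1
        push_cast
        ring
      calc Cf p σ b t j.1 * (p:ℝ) ^ (((n+1:ℕ):ℤ) * j.1) * ((p:ℝ)^(-j.1) * W)
          = Cf p σ b t j.1 * ((p:ℝ) ^ (((n+1:ℕ):ℤ) * j.1) * (p:ℝ)^(-j.1)) * W := by ring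
        _ = Cf p σ b t j.1 * (p:ℝ)^((n:ℤ) * j.1) * W := by rw [hzp]
    rw [tsum_congr hterm]
    rw [← ENNReal.ofReal_tsum_of_nonneg
      (fun j : ↑{j : ℤ | j ≤ -R} => mul_nonneg (mul_nonneg
        (le_of_lt (Cf_pos p σ b t hσ hb ht j.1)) (by positivity)) (by positivity))
      ((summable_Cf p σ b t hσ hb ht (n:ℤ) (by exact_mod_cast hn) (-R)).mul_right _)]
    rw [tsum_mul_right]
    rfl
  rw [hnum, hden]
  simp only [Cf_def]
  set S1 : ℝ := ∑' j : {j : ℤ // j ≤ -R}, Cf p σ b t j.1 * (p:ℝ) ^ (((n:ℤ)+1) * j.1) with hS1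
  set S2 : ℝ := ∑' j : {j : ℤ // j ≤ -R}, Cf p σ b t j.1 * (p:ℝ) ^ ((n:ℤ) * j.1) with hS2
  have hS2pos : 0 < S2 := by
    rw [hS2]
    apply Summable.tsum_pos (summable_Cf p σ b t hσ hb ht (n:ℤ) (by exact_mod_cast hn) (-R))
      (fun j => mul_nonneg (le_of_lt (Cf_pos p σ b t hσ hb ht j.1)) (by positivity))
      ⟨-R, le_refl _⟩
    exact mul_pos (Cf_pos p σ b t hσ hb ht _) (by positivity)
  rw [← ENNReal.ofReal_div_of_pos (by positivity : (0:ℝ) < S2 * W)]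
  congr 1
  have hWne : W ≠ 0 := ne_of_gt hW0
  have hS2ne : S2 ≠ 0 := ne_of_gt hS2pos
  field_simp
end

section
/- For a prime p, b > 0, σ > 0, d ≥ 1, and an integer R, let G(R,d,t) = Σ_{j ≤ −R} (e^{−σt p^{jb}} − e^{−σt p^{(j+1)b}}) p^{dj}. Then G(R,d,·) is differentiable at 0 with derivative G'(R,d,0) = σ(p^b − 1) p^{(b+d)(1−R)} / (p^{b+d} − 1). -/
open MeasureTheory Metric Real Filter Topology

/-- `G(R,k,t) = Σ_{j ≤ −R} (e^{−σt p^{jb}} − e^{−σt p^{(j+1)b}}) p^{kj}`. -/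
noncomputable def G (p : ℕ) (σ b : ℝ) (R k : ℤ) (t : ℝ) : ℝ :=
  ∑' j : {j : ℤ // j ≤ -R},
    (Real.exp (-(σ * t * (p : ℝ) ^ ((j.1 : ℝ) * b))) -
        Real.exp (-(σ * t * (p : ℝ) ^ (((j.1 : ℝ) + 1) * b)))) *
      (p : ℝ) ^ (k * j.1)

/-- `G(R,d,·)` is (right-)differentiable at `0` with derivative
`σ(p^b − 1) p^{(b+d)(1−R)} / (p^{b+d} − 1)`. -/
theorem G_hasDerivAt_zero (p : ℕ) (hp : p.Prime) (σ b : ℝ) (hσ : 0 < σ) (hb : 0 < b)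
    (d : ℕ) (hd : 1 ≤ d) (R : ℤ) :
    HasDerivWithinAt (G p σ b R (d : ℤ))
      (σ * ((p : ℝ) ^ b - 1) * (p : ℝ) ^ ((b + (d : ℝ)) * (1 - (R : ℝ))) /
        ((p : ℝ) ^ (b + (d : ℝ)) - 1))
      (Set.Ici (0 : ℝ)) 0 := by
  have hp1 : (1 : ℝ) < (p : ℝ) := by exact_mod_cast hp.one_lt
  have hp0 : (0 : ℝ) < (p : ℝ) := by linarith
  have hpne : (p : ℝ) ≠ 0 := ne_of_gt hp0
  set ι := {j : ℤ // j ≤ -R}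
  -- the functions and their derivatives
  set A : ι → ℝ := fun j => (p : ℝ) ^ ((j.1 : ℝ) * b) with hA
  set B : ι → ℝ := fun j => (p : ℝ) ^ (((j.1 : ℝ) + 1) * b) with hB
  set g : ι → ℝ → ℝ := fun j t =>
    (Real.exp (-(σ * t * A j)) - Real.exp (-(σ * t * B j))) * (p : ℝ) ^ ((d : ℤ) * j.1) with hg
  set g' : ι → ℝ → ℝ := fun j t =>
    (σ * B j * Real.exp (-(σ * t * B j)) - σ * A j * Real.exp (-(σ * t * A j))) *
      (p : ℝ) ^ ((d : ℤ) * j.1) with hg'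
  have hA0 : ∀ j, 0 < A j := fun j => Real.rpow_pos_of_pos hp0 _
  have hB0 : ∀ j, 0 < B j := fun j => Real.rpow_pos_of_pos hp0 _
  -- uniform bound M on A j, B j
  set M : ℝ := (p : ℝ) ^ ((1 - (R : ℝ)) * b) with hM
  have hAM : ∀ j, A j ≤ M := by
    intro j
    apply Real.rpow_le_rpow_of_exponent_le hp1.le
    have hj : (j.1 : ℝ) ≤ -(R : ℝ) := by exact_mod_cast j.2
    nlinarith
  have hBM : ∀ j, B j ≤ M := by
    intro j
    apply Real.rpow_le_rpow_of_exponent_le hp1.le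
    have : (j.1 : ℝ) + 1 ≤ 1 - (R : ℝ) := by
      have := j.2
      have : (j.1 : ℝ) ≤ -(R : ℝ) := by exact_mod_cast this
      linarith
    nlinarith
  have hM0 : 0 < M := Real.rpow_pos_of_pos hp0 _
  -- the equivalence ℕ ≃ ι
  have hmem : ∀ n : ℕ, -R - (n : ℤ) ≤ -R := fun n => by omega
  set e : ℕ ≃ ι :=
    { toFun := fun n => ⟨-R - (n : ℤ), hmem n⟩
      invFun := fun j => (-R - j.1).toNat
      left_inv := fun n => by simp
      right_inv := fun j => by
        have := j.2
        exact Subtype.ext (by simp; omega) } with he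
  -- summability of the geometric bound
  have hgeo : Summable (fun j : ι => (p : ℝ) ^ ((d : ℤ) * j.1)) := by
    rw [← e.summable_iff]
    have hcalc : ∀ n : ℕ, ((fun j : ι => (p : ℝ) ^ ((d : ℤ) * j.1)) ∘ e) n =
        (p : ℝ) ^ ((d : ℤ) * (-R)) * (((p : ℝ) ^ (-(d : ℤ)))) ^ n := by
      intro n
      simp only [Function.comp_apply, he, Equiv.coe_fn_mk]
      rw [← zpow_natCast ((p:ℝ) ^ (-(d:ℤ))) n, ← zpow_mul, ← zpow_add₀ hpne]
      ring_nf
    apply Summable.congr _ (fun n => (hcalc n).symm)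
    apply Summable.mul_left
    apply summable_geometric_of_lt_one (zpow_nonneg hp0.le _)
    rw [zpow_neg, zpow_natCast]
    rw [inv_lt_one_iff₀]
    right
    exact one_lt_pow₀ hp1 (by omega)
  have hgeopos : ∀ j : ι, (0:ℝ) < (p : ℝ) ^ ((d : ℤ) * j.1) := fun j => zpow_pos hp0 _
  -- each term has the stated derivative on ℝ
  have hderiv : ∀ (j : ι) (t : ℝ), HasDerivAt (g j) (g' j t) t := by
    intro j t
    have h1 : HasDerivAt (fun t : ℝ => Real.exp (-(σ * t * A j)))
        (-(σ * A j) * Real.exp (-(σ * t * A j))) t := by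
      have : HasDerivAt (fun t : ℝ => -(σ * t * A j)) (-(σ * A j)) t := by
        simpa using ((hasDerivAt_id t).const_mul (σ)).mul_const (A j) |>.fun_neg
      simpa [mul_comm] using this.exp
    have h2 : HasDerivAt (fun t : ℝ => Real.exp (-(σ * t * B j)))
        (-(σ * B j) * Real.exp (-(σ * t * B j))) t := by
      have : HasDerivAt (fun t : ℝ => -(σ * t * B j)) (-(σ * B j)) t := by
        simpa using ((hasDerivAt_id t).const_mul (σ)).mul_const (B j) |>.fun_neg
      simpa [mul_comm] using this.exp
    have := (h1.sub h2).mul_const ((p : ℝ) ^ ((d : ℤ) * j.1))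
    refine this.congr_deriv ?_
    simp only [hg']
    ring
  -- the bound on the derivative on Ioi (-1)
  set u : ι → ℝ := fun j => 2 * (σ * M * Real.exp (σ * M)) * (p : ℝ) ^ ((d : ℤ) * j.1) with hu
  have husum : Summable u := hgeo.mul_left _
  have hbound : ∀ (j : ι), ∀ t ∈ Set.Ioi (-1 : ℝ), ‖g' j t‖ ≤ u j := by
    intro j t ht
    simp only [Set.mem_Ioi] at ht
    have hexpA : Real.exp (-(σ * t * A j)) ≤ Real.exp (σ * M) := by
      apply Real.exp_le_exp.2
      have h1 : -(σ * t * A j) ≤ σ * A j := by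
        nlinarith [mul_nonneg (mul_nonneg hσ.le (hA0 j).le) (show (0:ℝ) ≤ 1 + t by linarith)]
      have h2 : σ * A j ≤ σ * M := by nlinarith [hAM j]
      linarith
    have hexpB : Real.exp (-(σ * t * B j)) ≤ Real.exp (σ * M) := by
      apply Real.exp_le_exp.2
      have h1 : -(σ * t * B j) ≤ σ * B j := by
        nlinarith [mul_nonneg (mul_nonneg hσ.le (hB0 j).le) (show (0:ℝ) ≤ 1 + t by linarith)]
      have h2 : σ * B j ≤ σ * M := by nlinarith [hBM j]
      linarith
    simp only [hg', Real.norm_eq_abs, abs_mul]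
    rw [abs_of_pos (hgeopos j)]
    have habs : |σ * B j * Real.exp (-(σ * t * B j)) - σ * A j * Real.exp (-(σ * t * A j))|
        ≤ 2 * (σ * M * Real.exp (σ * M)) := by
      have e1 : σ * B j * Real.exp (-(σ * t * B j)) ≤ σ * M * Real.exp (σ * M) :=
        mul_le_mul (mul_le_mul_of_nonneg_left (hBM j) hσ.le) hexpB (Real.exp_pos _).le
          (by positivity)
      have e2 : σ * A j * Real.exp (-(σ * t * A j)) ≤ σ * M * Real.exp (σ * M) :=
        mul_le_mul (mul_le_mul_of_nonneg_left (hAM j) hσ.le) hexpA (Real.exp_pos _).le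
          (by positivity)
      have p1 : 0 ≤ σ * B j * Real.exp (-(σ * t * B j)) := by positivity
      have p2 : 0 ≤ σ * A j * Real.exp (-(σ * t * A j)) := by positivity
      rw [abs_sub_le_iff]
      constructor <;> linarith
    exact mul_le_mul_of_nonneg_right habs (hgeopos j).le
  -- summability at 0 : all terms are 0
  have hg0 : Summable (fun j : ι => g j 0) := by
    have hz : (fun j : ι => g j 0) = fun _ : ι => (0:ℝ) := by
      funext j; simp [hg]
    rw [hz]
    exact summable_zero
  -- main differentiability statement
  have hmain : HasDerivAt (fun t => ∑' j : ι, g j t) (∑' j : ι, g' j 0) 0 :=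
    hasDerivAt_tsum_of_isPreconnected husum isOpen_Ioi (isPreconnected_Ioi)
      (fun j y _ => hderiv j y) hbound (by norm_num : (0:ℝ) ∈ Set.Ioi (-1:ℝ)) hg0
      (by norm_num : (0:ℝ) ∈ Set.Ioi (-1:ℝ))
  -- identify G with the tsum
  have hGeq : G p σ b R (d : ℤ) = fun t => ∑' j : ι, g j t := by
    funext t; rfl
  -- compute the value of the derivative sum
  set c := b + (d : ℝ) with hc
  have hc0 : 0 < c := by positivity
  have hterm : ∀ j : ι, g' j 0 = σ * ((p : ℝ) ^ b - 1) * (p : ℝ) ^ (c * (j.1 : ℝ)) := by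
    intro j
    simp only [hg', mul_zero, zero_mul, neg_zero, Real.exp_zero, mul_one]
    have hBA : B j = A j * (p : ℝ) ^ b := by
      rw [hA, hB, ← Real.rpow_add hp0]; ring_nf
    have hAz : A j * (p : ℝ) ^ ((d : ℤ) * j.1) = (p : ℝ) ^ (c * (j.1 : ℝ)) := by
      rw [hA, ← Real.rpow_intCast (p:ℝ) ((d:ℤ) * j.1), ← Real.rpow_add hp0]
      push_cast
      ring_nf
      rw [hc]; ring_nf
    rw [hBA]
    rw [show (σ * (A j * (p:ℝ)^b) - σ * A j) * (p : ℝ) ^ ((d : ℤ) * j.1)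
        = σ * ((p:ℝ)^b - 1) * (A j * (p : ℝ) ^ ((d : ℤ) * j.1)) by ring, hAz]
  -- geometric sum
  have hq0 : (0:ℝ) ≤ (p : ℝ) ^ (-c) := (Real.rpow_pos_of_pos hp0 _).le
  have hq1 : (p : ℝ) ^ (-c) < 1 := by
    rw [Real.rpow_neg hp0.le]
    rw [inv_lt_one_iff₀]
    right
    exact Real.one_lt_rpow_iff_of_pos hp0 |>.2 (Or.inl ⟨hp1, hc0⟩)
  have hS : ∑' j : ι, (p : ℝ) ^ (c * (j.1 : ℝ))
      = (p : ℝ) ^ (c * (-(R:ℝ))) * (1 - (p : ℝ) ^ (-c))⁻¹ := by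
    rw [← e.tsum_eq]
    have hcalc : ∀ n : ℕ, (p : ℝ) ^ (c * ((e n).1 : ℝ))
        = (p : ℝ) ^ (c * (-(R:ℝ))) * ((p : ℝ) ^ (-c)) ^ n := by
      intro n
      have hv : ((e n).1 : ℝ) = -(R:ℝ) - (n:ℝ) := by simp [he]
      rw [hv, show c * (-(R:ℝ) - (n:ℝ)) = c * (-(R:ℝ)) + (-c) * (n:ℝ) by ring,
        Real.rpow_add hp0]
      congr 1
      rw [← Real.rpow_natCast ((p:ℝ) ^ (-c)) n, ← Real.rpow_mul hp0.le]
    calc ∑' n : ℕ, (p : ℝ) ^ (c * ((e n).1 : ℝ))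
        = ∑' n : ℕ, (p : ℝ) ^ (c * (-(R:ℝ))) * ((p : ℝ) ^ (-c)) ^ n := tsum_congr hcalc
      _ = (p : ℝ) ^ (c * (-(R:ℝ))) * (1 - (p : ℝ) ^ (-c))⁻¹ := by
          rw [tsum_mul_left, tsum_geometric_of_lt_one hq0 hq1]
  -- final algebra
  have hpc1 : (1:ℝ) < (p : ℝ) ^ c := Real.one_lt_rpow_iff_of_pos hp0 |>.2 (Or.inl ⟨hp1, hc0⟩)
  have hfinal : ∑' j : ι, g' j 0
      = σ * ((p : ℝ) ^ b - 1) * (p : ℝ) ^ (c * (1 - (R : ℝ))) / ((p : ℝ) ^ c - 1) := by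
    rw [tsum_congr hterm, tsum_mul_left, hS]
    have h1 : (1:ℝ) - (p : ℝ) ^ (-c) ≠ 0 := by linarith
    have h2 : (p : ℝ) ^ c - 1 ≠ 0 := by linarith
    have h3 : (p : ℝ) ^ c ≠ 0 := by positivity
    rw [eq_div_iff h2]
    have e1 : (p:ℝ) ^ (c * (1 - (R:ℝ))) = (p:ℝ) ^ (c * (-(R:ℝ))) * (p:ℝ) ^ c := by
      rw [← Real.rpow_add hp0]; ring_nf
    have e2 : (1 - (p:ℝ) ^ (-c))⁻¹ * ((p:ℝ) ^ c - 1) = (p:ℝ) ^ c := by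
      rw [inv_mul_eq_div, div_eq_iff h1, mul_sub, mul_one, ← Real.rpow_add hp0]
      norm_num
    calc σ * ((p:ℝ)^b - 1) * ((p:ℝ)^(c * (-(R:ℝ))) * (1 - (p:ℝ)^(-c))⁻¹) * ((p:ℝ)^c - 1)
        = σ * ((p:ℝ)^b - 1) * (p:ℝ)^(c * (-(R:ℝ))) * ((1 - (p:ℝ)^(-c))⁻¹ * ((p:ℝ)^c - 1)) := by
          ring
      _ = σ * ((p:ℝ)^b - 1) * (p:ℝ)^(c * (-(R:ℝ))) * (p:ℝ)^c := by rw [e2]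
      _ = σ * ((p:ℝ)^b - 1) * (p:ℝ)^(c * (1 - (R:ℝ))) := by rw [e1]; ring
  rw [hGeq]
  rw [show σ * ((p : ℝ) ^ b - 1) * (p : ℝ) ^ ((b + (d : ℝ)) * (1 - (R : ℝ))) /
        ((p : ℝ) ^ (b + (d : ℝ)) - 1) = ∑' j : ι, g' j 0 by rw [hfinal]]
  exact hmain.hasDerivWithinAt
end

section
/- Let B(t) = e^{−σt p^{−Rb}} + p^{dR} Σ_{j < −R} (e^{−σt p^{jb}} − e^{−σt p^{(j+1)b}}) p^{dj} for t ≥ 0, with p prime, σ, b > 0, d ≥ 1, R ∈ ℤ. Then B is differentiable at 0 with B'(0) = −σ α_d p^{−Rb}, where α_d = 1 − (p^b − 1)/(p^{b+d} − 1). -/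
open Real Filter Topology

private lemma aux_hasDerivAt_exp (σ c : ℝ) :
    HasDerivAt (fun t : ℝ => Real.exp (-(σ * t * c))) (-(σ * c)) 0 := by
  have h : HasDerivAt (fun t : ℝ => -(σ * t * c)) (-(σ * c)) 0 := by
    exact ((((hasDerivAt_id (0:ℝ)).const_mul σ).mul_const c).neg).congr_deriv (by ring)
  simpa using h.exp

private lemma expand_mulU (q σ : ℝ) (hq : 0 < q) (X Y Z : ℝ) :
    σ * (q ^ Y - q ^ X) * q ^ Z = σ * q ^ (Y + Z) - σ * q ^ (X + Z) := by
  rw [Real.rpow_add hq, Real.rpow_add hq]; ring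

private lemma expand_mulK (q σ b : ℝ) (hq : 0 < q) (Z W : ℝ) :
    σ * (q ^ b - 1) * q ^ Z * q ^ W = σ * q ^ (b + (Z + W)) - σ * q ^ (Z + W) := by
  rw [Real.rpow_add hq, Real.rpow_add hq]; ring

private def survEquiv (R : ℤ) : ℕ ≃ {j : ℤ // j < -R} where
  toFun n := ⟨-R - 1 - (n : ℤ), by omega⟩
  invFun j := (-R - 1 - j.1).toNat
  left_inv n := by simp
  right_inv j := Subtype.ext (by have := j.2; dsimp only; omega)

/-- The survival-probability function
`B(t) = e^{−σt p^{−Rb}} + p^{dR} Σ_{j < −R} (e^{−σt p^{jb}} − e^{−σt p^{(j+1)b}}) p^{dj}`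
is (right-)differentiable at `0` with `B'(0) = −σ α_d p^{−Rb}`, where
`α_d = 1 − (p^b − 1)/(p^{b+d} − 1)`. -/
theorem survival_hasDerivAt_zero (p : ℕ) (hp : p.Prime) (σ b : ℝ) (hσ : 0 < σ)
    (hb : 0 < b) (d : ℕ) (hd : 1 ≤ d) (R : ℤ) :
    HasDerivWithinAt
      (fun t : ℝ =>
        Real.exp (-(σ * t * (p : ℝ) ^ (-(R : ℝ) * b))) +
          (p : ℝ) ^ ((d : ℤ) * R) *
            ∑' j : {j : ℤ // j < -R},
              (Real.exp (-(σ * t * (p : ℝ) ^ ((j.1 : ℝ) * b))) -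
                  Real.exp (-(σ * t * (p : ℝ) ^ (((j.1 : ℝ) + 1) * b)))) *
                (p : ℝ) ^ ((d : ℤ) * j.1))
      (-(σ * (1 - ((p : ℝ) ^ b - 1) / ((p : ℝ) ^ (b + (d : ℝ)) - 1)) *
          (p : ℝ) ^ (-(R : ℝ) * b)))
      (Set.Ici (0 : ℝ)) 0 := by
  have hq1 : (1:ℝ) < (p:ℝ) := by exact_mod_cast hp.one_lt
  have hq0 : (0:ℝ) < (p:ℝ) := lt_trans one_pos hq1
  have hd1 : (1:ℝ) ≤ (d:ℝ) := by exact_mod_cast hd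
  set q : ℝ := (p:ℝ) with hqdef
  set c : ℝ := b + (d:ℝ) with hcdef
  have hc0 : 0 < c := by rw [hcdef]; linarith
  set r : ℝ := q ^ (-c) with hrdef
  have hr0 : (0:ℝ) ≤ r := Real.rpow_nonneg hq0.le _
  have hr1 : r < 1 := Real.rpow_lt_one_of_one_lt_of_neg hq1 (by linarith)
  have hQc : 1 < q ^ c := (Real.one_lt_rpow_iff_of_pos hq0).mpr (Or.inl ⟨hq1, hc0⟩)
  have hQc0 : (0:ℝ) < q ^ c := Real.rpow_pos_of_pos hq0 _
  set K : ℝ := σ * (q ^ b - 1) * q ^ ((-(R:ℝ) - 1) * c) with hKdef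
  have hM : ∀ x y : ℝ, q ^ x * q ^ y = q ^ (x + y) := fun x y => (Real.rpow_add hq0 x y).symm
  set u : ℤ → ℝ := fun j => σ * (q ^ (((j:ℝ) + 1) * b) - q ^ ((j:ℝ) * b)) * q ^ ((d:ℤ) * j)
    with hudef
  set F : ℤ → ℝ → ℝ := fun j t =>
    (Real.exp (-(σ * t * q ^ ((j:ℝ) * b))) - Real.exp (-(σ * t * q ^ (((j:ℝ) + 1) * b)))) *
      q ^ ((d:ℤ) * j) with hFdef
  -- per-term limits of difference quotients
  have hab : ∀ j : {j : ℤ // j < -R},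
      Tendsto (fun t => F j.1 t / t) (𝓝[Set.Ioi (0:ℝ)] 0) (𝓝 (u j.1)) := by
    intro j
    have hdF : HasDerivAt (F j.1) (u j.1) 0 := by
      have h := ((aux_hasDerivAt_exp σ (q ^ ((j.1:ℝ) * b))).sub
          (aux_hasDerivAt_exp σ (q ^ (((j.1:ℝ) + 1) * b)))).mul_const (q ^ ((d:ℤ) * j.1))
      simp only [hFdef, hudef]
      refine HasDerivAt.congr_deriv h ?_
      ring
    have h := hdF.hasDerivWithinAt (s := Set.Ioi (0:ℝ))
    rw [hasDerivWithinAt_iff_tendsto_slope' (by simp)] at h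
    refine h.congr fun t => ?_
    simp [slope_def_field, hFdef]
  -- uniform bound
  have hbound : ∀ᶠ t in 𝓝[Set.Ioi (0:ℝ)] 0, ∀ j : {j : ℤ // j < -R}, ‖F j.1 t / t‖ ≤ u j.1 := by
    filter_upwards [self_mem_nhdsWithin] with t ht j
    have ht0 : (0:ℝ) < t := ht
    have hA0 : (0:ℝ) < q ^ ((j.1:ℝ) * b) := Real.rpow_pos_of_pos hq0 _
    have hB0' : (0:ℝ) < q ^ (((j.1:ℝ) + 1) * b) := Real.rpow_pos_of_pos hq0 _
    have hABq : q ^ ((j.1:ℝ) * b) ≤ q ^ (((j.1:ℝ) + 1) * b) :=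
      Real.rpow_le_rpow_of_exponent_le hq1.le (by nlinarith)
    have hC0 : (0:ℝ) < q ^ ((d:ℤ) * j.1) := zpow_pos hq0 _
    set A := σ * t * q ^ ((j.1:ℝ) * b) with hAdef
    set B := σ * t * q ^ (((j.1:ℝ) + 1) * b) with hBdef
    have hA : 0 ≤ A := by rw [hAdef]; positivity
    have hABle : A ≤ B := by rw [hAdef, hBdef]; nlinarith
    have h5 := Real.add_one_le_exp (A - B)
    have h6 : Real.exp (-A) ≤ 1 := Real.exp_le_one_iff.mpr (by linarith)
    have h7 : 0 < Real.exp (-A) := Real.exp_pos _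
    have h10 : Real.exp (A - B) ≤ 1 := Real.exp_le_one_iff.mpr (by linarith)
    have h8 : Real.exp (-B) = Real.exp (-A) * Real.exp (A - B) := by
      rw [← Real.exp_add]; ring_nf
    have hEl : 0 ≤ Real.exp (-A) - Real.exp (-B) := by
      have := Real.exp_le_exp.mpr (neg_le_neg hABle)
      linarith
    have hEu : Real.exp (-A) - Real.exp (-B) ≤ B - A := by
      nlinarith [mul_le_mul_of_nonneg_right h6 (sub_nonneg.mpr h10)]
    have hFval : F j.1 t = (Real.exp (-A) - Real.exp (-B)) * q ^ ((d:ℤ) * j.1) := by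
      simp only [hFdef, hAdef, hBdef]
    have hF0 : 0 ≤ F j.1 t := hFval ▸ mul_nonneg hEl hC0.le
    rw [Real.norm_eq_abs, abs_div, abs_of_nonneg hF0, abs_of_pos ht0, div_le_iff₀ ht0, hFval]
    simp only [hudef]
    calc (Real.exp (-A) - Real.exp (-B)) * q ^ ((d:ℤ) * j.1)
        ≤ (B - A) * q ^ ((d:ℤ) * j.1) := mul_le_mul_of_nonneg_right hEu hC0.le
      _ = σ * (q ^ (((j.1:ℝ) + 1) * b) - q ^ ((j.1:ℝ) * b)) * q ^ ((d:ℤ) * j.1) * t := by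
          rw [hAdef, hBdef]; ring
  -- summability of the bound and value of its sum
  have key : ∀ n : ℕ, u ((survEquiv R n : {j : ℤ // j < -R}) : ℤ) = K * r ^ n := by
    intro n
    have hj : ((survEquiv R n : {j : ℤ // j < -R}) : ℤ) = -R - 1 - (n : ℤ) := rfl
    rw [hj]
    simp only [hudef, hKdef, hrdef]
    rw [← Real.rpow_intCast q ((d:ℤ) * (-R - 1 - (n:ℤ))),
        ← Real.rpow_natCast (q ^ (-c)) n,
        ← Real.rpow_mul hq0.le (-c) (n:ℝ),
        expand_mulU q σ hq0, expand_mulK q σ b hq0]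
    congr 2
    · rw [hcdef]; push_cast; ring
    · rw [hcdef]; push_cast; ring
  have hgeom : Summable (fun n : ℕ => K * r ^ n) :=
    (summable_geometric_of_lt_one hr0 hr1).mul_left K
  have hsummable : Summable (fun j : {j : ℤ // j < -R} => u j.1) :=
    (Equiv.summable_iff (survEquiv R)).mp (hgeom.congr fun n => (key n).symm)
  have hS : ∑' j : {j : ℤ // j < -R}, u j.1 = K * (1 - r)⁻¹ := by
    rw [← Equiv.tsum_eq (survEquiv R) (fun j => u j.1)]
    rw [tsum_congr key, tsum_mul_left, tsum_geometric_of_lt_one hr0 hr1]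
  -- limit of the series of quotients
  have htsum : Tendsto (fun t : ℝ => ∑' j : {j : ℤ // j < -R}, F j.1 t / t)
      (𝓝[Set.Ioi (0:ℝ)] 0) (𝓝 (∑' j : {j : ℤ // j < -R}, u j.1)) :=
    tendsto_tsum_of_dominated_convergence hsummable hab hbound
  -- first term
  have h1 : Tendsto (fun t : ℝ => (Real.exp (-(σ * t * q ^ (-(R:ℝ) * b))) - 1) / t)
      (𝓝[Set.Ioi (0:ℝ)] 0) (𝓝 (-(σ * q ^ (-(R:ℝ) * b)))) := by
    have h := (aux_hasDerivAt_exp σ (q ^ (-(R:ℝ) * b))).hasDerivWithinAt (s := Set.Ioi (0:ℝ))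
    rw [hasDerivWithinAt_iff_tendsto_slope' (by simp)] at h
    refine h.congr fun t => ?_
    simp [slope_def_field]
  have hGt := h1.add (htsum.const_mul (q ^ ((d:ℤ) * R)))
  rw [hS] at hGt
  -- the value of the limit
  have e1' : q ^ ((d:ℤ) * R) * q ^ ((-(R:ℝ) - 1) * c) * q ^ c = q ^ (-(R:ℝ) * b) := by
    rw [← Real.rpow_intCast q ((d:ℤ) * R), hM, hM]
    congr 1
    rw [hcdef]; push_cast; ring
  have hQcne : q ^ c ≠ 0 := ne_of_gt hQc0
  have hQc1ne : q ^ c - 1 ≠ 0 := sub_ne_zero.mpr (ne_of_gt hQc)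
  have hfinal : -(σ * q ^ (-(R:ℝ) * b)) + q ^ ((d:ℤ) * R) * (K * (1 - r)⁻¹)
      = -(σ * (1 - (q ^ b - 1) / (q ^ c - 1)) * q ^ (-(R:ℝ) * b)) := by
    rw [hKdef, hrdef, Real.rpow_neg hq0.le, ← e1']
    have hrne : (1 - (q ^ c)⁻¹) ≠ 0 := by
      have : (q ^ c)⁻¹ < 1 := by
        rw [inv_lt_one_iff₀]; right; exact hQc
      linarith
    field_simp
    ring
  rw [hasDerivWithinAt_iff_tendsto_slope, Set.Ici_sdiff_left, ← hfinal]
  refine hGt.congr' ?_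
  filter_upwards [self_mem_nhdsWithin] with t ht
  have ht0 : (0:ℝ) < t := ht
  have htne : t ≠ 0 := ne_of_gt ht0
  rw [slope_def_field]
  simp only [hFdef, sub_zero, mul_zero, zero_mul, neg_zero, Real.exp_zero, sub_self,
    tsum_zero, add_zero]
  rw [tsum_div_const]
  field_simp
  ring
end
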